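/- arXiv:math/0102036 — 3 statements merged into one kernel-verified Lean document; each statement's English description precedes it below -/
import Mathlib

section
/- Let q not be a root of unity, let l, l' ∈ (1/2)ℤ with l, l' ≥ 0, and let ε, ε' ∈ {1, −1, i, −i}. Assume either (ε, ε' ∈ {1, −1}), or (ε, ε' ∈ {i, −i}), or (l + l' ∉ ℤ). Then for every j ∈ ℤ the operators (T_l^{(ε)} ⊗ T_{l'}^{(ε')})(q^j·K1K2 + q^{−j}·K1⁻¹K2⁻¹) and (T_l^{(ε)} ⊗ T_{l'}^{(ε')})(q^j·K1K2⁻¹ + q^{−j}·K1⁻¹K2) are invertible, the representation T_l^{(ε)} ⊗ T_{l'}^{(ε')} of Û_q(sl_2)^{⊗2} extends uniquely to a representation of Û_q(sl_2)^{⊗2,ext} by sending u_j and v_j to the inverses of these operators, and this extended representation is irreducible. -/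
noncomputable section

open Classical

/-- The q-number `[a]` for the half-integer `a/2` (argument is the doubled half-integer;
`s` is the fixed square root `q^{1/2}`). -/
def qNum (q s : ℂ) (a : ℤ) : ℂ := (s ^ a - s ^ (-a)) / (q - q⁻¹)

/-- Generators of `Û_q(sl_2)^{⊗2}`: two copies (indexed by `Fin 2`) of `e, f, K, K⁻¹, x`. -/
inductive QG : Type
  | e : Fin 2 → QG
  | f : Fin 2 → QG
  | K : Fin 2 → QG
  | Ki : Fin 2 → QG
  | x : Fin 2 → QG

/-- The copy (`0` or `1`) to which a generator belongs. -/
def QG.copy : QG → Fin 2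
  | .e i => i | .f i => i | .K i => i | .Ki i => i | .x i => i

/-- The Casimir element `c_i = e_i f_i + (q⁻¹ K_i² + q K_i⁻²)/(q−q⁻¹)²` in a free algebra,
relative to an interpretation `g` of the generators. -/
def casFree {X : Type} (q : ℂ) (g : QG → FreeAlgebra ℂ X) (i : Fin 2) : FreeAlgebra ℂ X :=
  g (QG.e i) * g (QG.f i) +
    ((q - q⁻¹) ^ 2)⁻¹ • (q⁻¹ • (g (QG.K i)) ^ 2 + q • (g (QG.Ki i)) ^ 2)

/-- Defining relations of `Û_q(sl_2)^{⊗2}`, relative to an interpretation `g` of the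
generators in a free algebra: the `U_q(sl_2)` relations in each copy, the Casimir quartic
relation for the central elements `x_i`, centrality of `x_i`, and commutation of the two
copies. -/
inductive BaseRel (q : ℂ) {X : Type} (g : QG → FreeAlgebra ℂ X) :
    FreeAlgebra ℂ X → FreeAlgebra ℂ X → Prop
  | KKi (i : Fin 2) : BaseRel q g (g (QG.K i) * g (QG.Ki i)) 1
  | KiK (i : Fin 2) : BaseRel q g (g (QG.Ki i) * g (QG.K i)) 1
  | Ke (i : Fin 2) : BaseRel q g (g (QG.K i) * g (QG.e i)) (q • (g (QG.e i) * g (QG.K i)))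
  | Kf (i : Fin 2) : BaseRel q g (g (QG.K i) * g (QG.f i)) (q⁻¹ • (g (QG.f i) * g (QG.K i)))
  | ef (i : Fin 2) : BaseRel q g (g (QG.e i) * g (QG.f i) - g (QG.f i) * g (QG.e i))
      ((q - q⁻¹)⁻¹ • ((g (QG.K i)) ^ 2 - (g (QG.Ki i)) ^ 2))
  | xe (i : Fin 2) : BaseRel q g (g (QG.x i) * g (QG.e i)) (g (QG.e i) * g (QG.x i))
  | xf (i : Fin 2) : BaseRel q g (g (QG.x i) * g (QG.f i)) (g (QG.f i) * g (QG.x i))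
  | xK (i : Fin 2) : BaseRel q g (g (QG.x i) * g (QG.K i)) (g (QG.K i) * g (QG.x i))
  | xKi (i : Fin 2) : BaseRel q g (g (QG.x i) * g (QG.Ki i)) (g (QG.Ki i) * g (QG.x i))
  | quartic (i : Fin 2) : BaseRel q g
      (q⁻¹ • (g (QG.x i)) ^ 4 - (q - q⁻¹) ^ 2 • (casFree q g i * (g (QG.x i)) ^ 2) + q • 1) 0
  | cross (a b : QG) (ha : QG.copy a = 0) (hb : QG.copy b = 1) :
      BaseRel q g (g a * g b) (g b * g a)

/-- The algebra `Û_q(sl_2)^{⊗2}`. -/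
abbrev Uhat2 (q : ℂ) : Type := RingQuot (BaseRel q (FreeAlgebra.ι ℂ : QG → FreeAlgebra ℂ QG))

/-- The image of a generator in `Û_q(sl_2)^{⊗2}`. -/
def gen2 (q : ℂ) (a : QG) : Uhat2 q :=
  RingQuot.mkAlgHom ℂ (BaseRel q (FreeAlgebra.ι ℂ)) (FreeAlgebra.ι ℂ a)

/-- Generators of `Û_q(sl_2)^{⊗2,ext}`: those of `Û_q(sl_2)^{⊗2}` together with the
elements `u_j`, `v_j` (`j ∈ ℤ`). -/
inductive QGE : Type
  | base : QG → QGE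
  | u : ℤ → QGE
  | v : ℤ → QGE

namespace ExtFree

/-- Interpretation of the basic generators in the free algebra on `QGE`. -/
def g (a : QG) : FreeAlgebra ℂ QGE := FreeAlgebra.ι ℂ (QGE.base a)
/-- The generator `u_j` in the free algebra on `QGE`. -/
def U (j : ℤ) : FreeAlgebra ℂ QGE := FreeAlgebra.ι ℂ (QGE.u j)
/-- The generator `v_j` in the free algebra on `QGE`. -/
def V (j : ℤ) : FreeAlgebra ℂ QGE := FreeAlgebra.ι ℂ (QGE.v j)
/-- The element `q^j K1 K2 + q^{−j} K1⁻¹ K2⁻¹` (to be inverted by `u_j`). -/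
def P (q : ℂ) (j : ℤ) : FreeAlgebra ℂ QGE :=
  q ^ j • (g (QG.K 0) * g (QG.K 1)) + q ^ (-j) • (g (QG.Ki 0) * g (QG.Ki 1))
/-- The element `q^j K1 K2⁻¹ + q^{−j} K1⁻¹ K2` (to be inverted by `v_j`). -/
def Q (q : ℂ) (j : ℤ) : FreeAlgebra ℂ QGE :=
  q ^ j • (g (QG.K 0) * g (QG.Ki 1)) + q ^ (-j) • (g (QG.Ki 0) * g (QG.K 1))

end ExtFree

open ExtFree in
/-- Defining relations of `Û_q(sl_2)^{⊗2,ext}`: those of `Û_q(sl_2)^{⊗2}` together with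
the relations making `u_j`, `v_j` two-sided inverses of `q^j K1K2 + q^{−j} K1⁻¹K2⁻¹` and
`q^j K1K2⁻¹ + q^{−j} K1⁻¹K2`, commuting with `K_i^{±1}`, `x_i`, and shifted past
`e_i`, `f_i`. -/
inductive ExtRel (q : ℂ) : FreeAlgebra ℂ QGE → FreeAlgebra ℂ QGE → Prop
  | ofBase {a b : FreeAlgebra ℂ QGE} : BaseRel q ExtFree.g a b → ExtRel q a b
  | uInvL (j : ℤ) : ExtRel q (U j * P q j) 1
  | uInvR (j : ℤ) : ExtRel q (P q j * U j) 1
  | vInvL (j : ℤ) : ExtRel q (V j * Q q j) 1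
  | vInvR (j : ℤ) : ExtRel q (Q q j * V j) 1
  | uK (j : ℤ) (i : Fin 2) : ExtRel q (U j * g (QG.K i)) (g (QG.K i) * U j)
  | uKi (j : ℤ) (i : Fin 2) : ExtRel q (U j * g (QG.Ki i)) (g (QG.Ki i) * U j)
  | ux (j : ℤ) (i : Fin 2) : ExtRel q (U j * g (QG.x i)) (g (QG.x i) * U j)
  | vK (j : ℤ) (i : Fin 2) : ExtRel q (V j * g (QG.K i)) (g (QG.K i) * V j)
  | vKi (j : ℤ) (i : Fin 2) : ExtRel q (V j * g (QG.Ki i)) (g (QG.Ki i) * V j)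
  | vx (j : ℤ) (i : Fin 2) : ExtRel q (V j * g (QG.x i)) (g (QG.x i) * V j)
  | ue (j : ℤ) (i : Fin 2) : ExtRel q (U j * g (QG.e i)) (g (QG.e i) * U (j + 1))
  | uf (j : ℤ) (i : Fin 2) : ExtRel q (U j * g (QG.f i)) (g (QG.f i) * U (j - 1))
  | ve1 (j : ℤ) : ExtRel q (V j * g (QG.e 0)) (g (QG.e 0) * V (j + 1))
  | vf1 (j : ℤ) : ExtRel q (V j * g (QG.f 0)) (g (QG.f 0) * V (j - 1))
  | ve2 (j : ℤ) : ExtRel q (V j * g (QG.e 1)) (g (QG.e 1) * V (j - 1))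
  | vf2 (j : ℤ) : ExtRel q (V j * g (QG.f 1)) (g (QG.f 1) * V (j + 1))

/-- The algebra `Û_q(sl_2)^{⊗2,ext}`. -/
abbrev UhatExt (q : ℂ) : Type := RingQuot (ExtRel q)

/-- The image of a generator in `Û_q(sl_2)^{⊗2,ext}`. -/
def genE (q : ℂ) (a : QGE) : UhatExt q :=
  RingQuot.mkAlgHom ℂ (ExtRel q) (FreeAlgebra.ι ℂ a)

/-- `e_i` in `Û_q(sl_2)^{⊗2,ext}` (copy `i ∈ {0,1}` corresponds to subscript `i+1`). -/
def eE (q : ℂ) (i : Fin 2) : UhatExt q := genE q (QGE.base (QG.e i))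
/-- `f_i` in `Û_q(sl_2)^{⊗2,ext}`. -/
def fE (q : ℂ) (i : Fin 2) : UhatExt q := genE q (QGE.base (QG.f i))
/-- `K_i` in `Û_q(sl_2)^{⊗2,ext}`. -/
def KE (q : ℂ) (i : Fin 2) : UhatExt q := genE q (QGE.base (QG.K i))
/-- `K_i⁻¹` in `Û_q(sl_2)^{⊗2,ext}`. -/
def KiE (q : ℂ) (i : Fin 2) : UhatExt q := genE q (QGE.base (QG.Ki i))
/-- `x_i` in `Û_q(sl_2)^{⊗2,ext}`. -/
def xE (q : ℂ) (i : Fin 2) : UhatExt q := genE q (QGE.base (QG.x i))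
/-- `u_j` in `Û_q(sl_2)^{⊗2,ext}`. -/
def uE (q : ℂ) (j : ℤ) : UhatExt q := genE q (QGE.u j)
/-- `v_j` in `Û_q(sl_2)^{⊗2,ext}`. -/
def vE (q : ℂ) (j : ℤ) : UhatExt q := genE q (QGE.v j)

/-- The Casimir element `c_i` of the `i`-th copy in `Û_q(sl_2)^{⊗2,ext}`. -/
def casE (q : ℂ) (i : Fin 2) : UhatExt q :=
  eE q i * fE q i + ((q - q⁻¹) ^ 2)⁻¹ • (q⁻¹ • (KE q i) ^ 2 + q • (KiE q i) ^ 2)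

/-- The two-sided inverse `x_i⁻¹ = q⁻¹(−x_i³ q⁻¹ + c_i (q−q⁻¹)² x_i)` of `x_i`. -/
def xinvE (q : ℂ) (i : Fin 2) : UhatExt q :=
  q⁻¹ • (-(q⁻¹ • (xE q i) ^ 3) + (q - q⁻¹) ^ 2 • (casE q i * xE q i))

/-- The image of `I_21` under the homomorphism `φ` of Theorem 2:
`φ(I21) = i (K1K2 − K1⁻¹K2⁻¹)/(q − q⁻¹)`. -/
def phi21 (q : ℂ) : UhatExt q :=
  (Complex.I * (q - q⁻¹)⁻¹) • (KE q 0 * KE q 1 - KiE q 0 * KiE q 1)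

/-- The image of `I_43` under the homomorphism `φ` of Theorem 2:
`φ(I43) = i (K1K2⁻¹ − K1⁻¹K2)/(q − q⁻¹)`. -/
def phi43 (q : ℂ) : UhatExt q :=
  (Complex.I * (q - q⁻¹)⁻¹) • (KE q 0 * KiE q 1 - KiE q 0 * KE q 1)

/-- The image of `I_32` under the homomorphism `φ` of Theorem 2 (formula (25)). -/
def phi32 (q : ℂ) : UhatExt q :=
  -((q • (xinvE q 0 * KiE q 1) + q⁻¹ • (xE q 0 * KE q 1)) * uE q (-1) * vE q 1 * eE q 1)
  + (q • (xinvE q 0 * KE q 1) + q⁻¹ • (xE q 0 * KiE q 1)) * uE q 1 * vE q (-1) * fE q 1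
  + (q • (xinvE q 1 * KiE q 0) + q⁻¹ • (xE q 1 * KE q 0)) * uE q (-1) * vE q (-1) * eE q 0
  - (q • (xinvE q 1 * KE q 0) + q⁻¹ • (xE q 1 * KiE q 0)) * uE q 1 * vE q 1 * fE q 0

/-- Index set `{m : −l ≤ m ≤ l, m ≡ l (mod 2)}` (doubled half-integers) for the weights
of the `(2l+1)`-dimensional representation of `U_q(sl_2)`. -/
def mSupp (l : ℤ) : Finset ℤ := (Finset.Icc (-l) l).filter (fun m => (l - m) % 2 = 0)

/-- Index set for the tensor product representation. -/
def tSupp (l l' : ℤ) : Finset (ℤ × ℤ) := (mSupp l) ×ˢ (mSupp l')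

/-- Basis vector `|l,m⟩ ⊗ |l',m'⟩` of the tensor product space (zero if out of range). -/
def tvec (l l' : ℤ) (p : ℤ × ℤ) : (↥(tSupp l l') → ℂ) :=
  fun b => if (b : ℤ × ℤ) = p then 1 else 0

/-- The sign with which `T_l^{(ε)}(f)` differs from `T_l^{(1)}(f)`: it is `−1` for
`ε = ±i` and `+1` for `ε = ±1`. -/
def fSign (ε : ℂ) : ℂ := if ε = Complex.I ∨ ε = -Complex.I then -1 else 1

/-- The representation `T_l^{(ε)} ⊗ T_{l'}^{(ε')}` of `Û_q(sl_2)^{⊗2}`, characterized by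
its values on the generators (doubled half-integer indices; `q^m = s^m` for doubled `m`):
`T(K)|l,m⟩ = ε q^m |l,m⟩`, `T(e)|l,m⟩ = [l−m] |l,m+1⟩`,
`T(f)|l,m⟩ = ± [l+m] |l,m−1⟩`, `T(x) = q^{−l}`, in each factor. -/
def IsTensorRep (q s : ℂ) (l l' : ℤ) (ε ε' : ℂ)
    (T : Uhat2 q →ₐ[ℂ] Module.End ℂ (↥(tSupp l l') → ℂ)) : Prop :=
  ∀ m m' : ℤ, (m, m') ∈ tSupp l l' →
    T (gen2 q (QG.K 0)) (tvec l l' (m, m')) = (ε * s ^ m) • tvec l l' (m, m') ∧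
    T (gen2 q (QG.Ki 0)) (tvec l l' (m, m')) = (ε * s ^ m)⁻¹ • tvec l l' (m, m') ∧
    T (gen2 q (QG.e 0)) (tvec l l' (m, m')) = qNum q s (l - m) • tvec l l' (m + 2, m') ∧
    T (gen2 q (QG.f 0)) (tvec l l' (m, m')) =
      (fSign ε * qNum q s (l + m)) • tvec l l' (m - 2, m') ∧
    T (gen2 q (QG.x 0)) (tvec l l' (m, m')) = s ^ (-l) • tvec l l' (m, m') ∧
    T (gen2 q (QG.K 1)) (tvec l l' (m, m')) = (ε' * s ^ m') • tvec l l' (m, m') ∧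
    T (gen2 q (QG.Ki 1)) (tvec l l' (m, m')) = (ε' * s ^ m')⁻¹ • tvec l l' (m, m') ∧
    T (gen2 q (QG.e 1)) (tvec l l' (m, m')) = qNum q s (l' - m') • tvec l l' (m, m' + 2) ∧
    T (gen2 q (QG.f 1)) (tvec l l' (m, m')) =
      (fSign ε' * qNum q s (l' + m')) • tvec l l' (m, m' - 2) ∧
    T (gen2 q (QG.x 1)) (tvec l l' (m, m')) = s ^ (-l') • tvec l l' (m, m')

/-- The element `q^j K1K2 + q^{−j} K1⁻¹K2⁻¹` of `Û_q(sl_2)^{⊗2}`. -/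
def P2 (q : ℂ) (j : ℤ) : Uhat2 q :=
  q ^ j • (gen2 q (QG.K 0) * gen2 q (QG.K 1)) + q ^ (-j) • (gen2 q (QG.Ki 0) * gen2 q (QG.Ki 1))

/-- The element `q^j K1K2⁻¹ + q^{−j} K1⁻¹K2` of `Û_q(sl_2)^{⊗2}`. -/
def Q2 (q : ℂ) (j : ℤ) : Uhat2 q :=
  q ^ j • (gen2 q (QG.K 0) * gen2 q (QG.Ki 1)) + q ^ (-j) • (gen2 q (QG.Ki 0) * gen2 q (QG.K 1))


namespace Stmt2Aux

variable {q s : ℂ}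

lemma zpow_eq_zero_exp (hq0 : q ≠ 0) (hroot : ∀ n : ℕ, 1 ≤ n → q ^ n ≠ 1)
    {N : ℤ} (h : q ^ N = 1) : N = 0 := by
  rcases lt_trichotomy N 0 with hN | hN | hN
  · exfalso
    have h1 : q ^ (-N) = 1 := by rw [zpow_neg, h, inv_one]
    have h2 : q ^ (-N).toNat = 1 := by
      rwa [← zpow_natCast, Int.toNat_of_nonneg (by omega)]
    exact hroot _ (by omega) h2
  · exact hN
  · exfalso
    have h2 : q ^ N.toNat = 1 := by rwa [← zpow_natCast, Int.toNat_of_nonneg (by omega)]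
    exact hroot _ (by omega) h2

lemma zpow_ne_negone (hq0 : q ≠ 0) (hroot : ∀ n : ℕ, 1 ≤ n → q ^ n ≠ 1) (N : ℤ) :
    q ^ N ≠ -1 := by
  intro h
  have h2 : q ^ (N + N) = 1 := by rw [zpow_add₀ hq0, h]; ring
  have h3 := zpow_eq_zero_exp hq0 hroot h2
  have hN : N = 0 := by omega
  rw [hN] at h; norm_num at h

lemma s_ne_zero (hq0 : q ≠ 0) (hs : s ^ 2 = q) : s ≠ 0 := by
  intro h; rw [h] at hs; simp at hs; exact hq0 hs.symm

lemma s_sq_zpow (hq0 : q ≠ 0) (hs : s ^ 2 = q) (a : ℤ) : s ^ (2 * a) = q ^ a := by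
  rw [zpow_mul, show (s:ℂ)^(2:ℤ) = q by rw [← hs, zpow_two, sq]]

lemma s_zpow_inj (hq0 : q ≠ 0) (hroot : ∀ n : ℕ, 1 ≤ n → q ^ n ≠ 1) (hs : s ^ 2 = q)
    {m n : ℤ} (hpar : (m - n) % 2 = 0) (h : s ^ m = s ^ n) : m = n := by
  have hs0 : s ≠ 0 := s_ne_zero hq0 hs
  obtain ⟨t, ht⟩ : ∃ t : ℤ, m - n = 2 * t := ⟨(m - n) / 2, by omega⟩
  have h1 : s ^ (m - n) = 1 := by
    rw [zpow_sub₀ hs0, h, div_self (zpow_ne_zero _ hs0)]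
  rw [ht, s_sq_zpow hq0 hs] at h1
  have := zpow_eq_zero_exp hq0 hroot h1
  omega

lemma sub_inv_ne_zero (hq0 : q ≠ 0) (hq1 : q ≠ 1) (hqm1 : q ≠ -1) : q - q⁻¹ ≠ 0 := by
  intro h
  have h2 : q ^ 2 = 1 := by
    have : q * q - q * q⁻¹ = 0 := by rw [← mul_sub, h, mul_zero]
    rw [mul_inv_cancel₀ hq0] at this
    have : q * q = 1 := by linear_combination this
    rw [sq]; exact this
  have : (q - 1) * (q + 1) = 0 := by ring_nf; linear_combination h2
  rcases mul_eq_zero.mp this with h | h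
  · exact hq1 (by linear_combination h)
  · exact hqm1 (by linear_combination h)

lemma qNum_ne_zero (hq0 : q ≠ 0) (hq1 : q ≠ 1) (hqm1 : q ≠ -1)
    (hroot : ∀ n : ℕ, 1 ≤ n → q ^ n ≠ 1) (hs : s ^ 2 = q)
    {a : ℤ} (ha : a ≠ 0) : qNum q s a ≠ 0 := by
  rw [qNum, div_ne_zero_iff]
  refine ⟨?_, sub_inv_ne_zero hq0 hq1 hqm1⟩
  intro h
  have h2 : s ^ a = s ^ (-a) := by linear_combination h
  have := s_zpow_inj hq0 hroot hs (by omega) h2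
  omega

variable {l l' : ℤ}

lemma tvec_eq_single (b : ↥(tSupp l l')) : tvec l l' ↑b = Pi.single b 1 := by
  funext c
  simp only [tvec, Pi.single_apply]
  by_cases h : c = b
  · simp [h]
  · rw [if_neg (fun hc => h (Subtype.ext hc)), if_neg h]

lemma end_ext {A B : Module.End ℂ (↥(tSupp l l') → ℂ)}
    (h : ∀ m m' : ℤ, (m, m') ∈ tSupp l l' → A (tvec l l' (m, m')) = B (tvec l l' (m, m'))) :
    A = B := by
  apply Module.Basis.ext (Pi.basisFun ℂ ↥(tSupp l l'))
  intro b
  have hb : (Pi.basisFun ℂ ↥(tSupp l l')) b = tvec l l' ↑b := by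
    rw [tvec_eq_single]; funext c; simp [Pi.basisFun_apply, Pi.single_apply]
  have hmem : ((b : ℤ × ℤ).1, (b : ℤ × ℤ).2) ∈ tSupp l l' := by
    simpa using b.2
  have := h (b : ℤ × ℤ).1 (b : ℤ × ℤ).2 hmem
  rwa [hb]

def diag (l l' : ℤ) (d : ℤ × ℤ → ℂ) : Module.End ℂ (↥(tSupp l l') → ℂ) where
  toFun v := fun b => d ↑b * v b
  map_add' u v := by funext b; simp [mul_add]
  map_smul' c v := by funext b; simp only [Pi.smul_apply, smul_eq_mul, RingHom.id_apply]; ring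

lemma diag_apply (d : ℤ × ℤ → ℂ) (v : ↥(tSupp l l') → ℂ) (b : ↥(tSupp l l')) :
    diag l l' d v b = d ↑b * v b := rfl

lemma diag_tvec (d : ℤ × ℤ → ℂ) (p : ℤ × ℤ) :
    diag l l' d (tvec l l' p) = d p • tvec l l' p := by
  funext b
  simp only [diag_apply, Pi.smul_apply, tvec, smul_eq_mul]
  by_cases h : (b : ℤ × ℤ) = p
  · rw [if_pos h, h]
  · rw [if_neg h]; ring

lemma diag_mul (d d' : ℤ × ℤ → ℂ) :
    diag l l' d * diag l l' d' = diag l l' (fun p => d p * d' p) := by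
  apply LinearMap.ext; intro v; funext b
  simp [Module.End.mul_apply, diag_apply, mul_assoc]

lemma diag_comm (d d' : ℤ × ℤ → ℂ) :
    diag l l' d * diag l l' d' = diag l l' d' * diag l l' d := by
  rw [diag_mul, diag_mul]; congr 1; funext p; ring

lemma diag_one : diag l l' (fun _ => 1) = 1 := by
  apply LinearMap.ext; intro v; funext b; simp [diag_apply]

lemma diag_smul (c : ℂ) (d : ℤ × ℤ → ℂ) :
    c • diag l l' d = diag l l' (fun p => c * d p) := by
  apply LinearMap.ext; intro v; funext b
  simp only [LinearMap.smul_apply, Pi.smul_apply, diag_apply, smul_eq_mul]; ring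

lemma diag_add (d d' : ℤ × ℤ → ℂ) :
    diag l l' d + diag l l' d' = diag l l' (fun p => d p + d' p) := by
  apply LinearMap.ext; intro v; funext b
  simp only [LinearMap.add_apply, Pi.add_apply, diag_apply]; ring

lemma diag_congr {d d' : ℤ × ℤ → ℂ} (h : ∀ p ∈ tSupp l l', d p = d' p) :
    diag l l' d = diag l l' d' := by
  apply LinearMap.ext; intro v; funext b
  rw [diag_apply, diag_apply, h ↑b b.2]

lemma diag_mul_inv {d : ℤ × ℤ → ℂ} (h : ∀ p ∈ tSupp l l', d p ≠ 0) :
    diag l l' d * diag l l' (fun p => (d p)⁻¹) = 1 := by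
  rw [diag_mul, ← diag_one (l := l) (l' := l')]
  exact diag_congr (fun p hp => mul_inv_cancel₀ (h p hp))

lemma diag_inv_mul {d : ℤ × ℤ → ℂ} (h : ∀ p ∈ tSupp l l', d p ≠ 0) :
    diag l l' (fun p => (d p)⁻¹) * diag l l' d = 1 := by
  rw [diag_comm]; exact diag_mul_inv h

lemma tvec_span (v : ↥(tSupp l l') → ℂ) :
    v = ∑ b : ↥(tSupp l l'), v b • tvec l l' ↑b := by
  funext c
  rw [Finset.sum_apply]
  rw [Finset.sum_eq_single c]
  · simp [tvec]
  · intro b _ hb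
    simp only [Pi.smul_apply, tvec, smul_eq_mul]
    rw [if_neg (fun hc => hb (Subtype.ext hc).symm), mul_zero]
  · intro h; exact absurd (Finset.mem_univ c) h

def kap1 (s ε : ℂ) (p : ℤ × ℤ) : ℂ := ε * s ^ p.1
def kap2 (s ε' : ℂ) (p : ℤ × ℤ) : ℂ := ε' * s ^ p.2

def kapP (q s ε ε' : ℂ) (j : ℤ) (p : ℤ × ℤ) : ℂ :=
  q ^ j * (kap1 s ε p * kap2 s ε' p) + q ^ (-j) * ((kap1 s ε p)⁻¹ * (kap2 s ε' p)⁻¹)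

def kapQ (q s ε ε' : ℂ) (j : ℤ) (p : ℤ × ℤ) : ℂ :=
  q ^ j * (kap1 s ε p * (kap2 s ε' p)⁻¹) + q ^ (-j) * ((kap1 s ε p)⁻¹ * kap2 s ε' p)

variable {ε ε' : ℂ}

lemma eps_sq (hε : ε ∈ ({1, -1, Complex.I, -Complex.I} : Set ℂ)) :
    ε ^ 2 = 1 ∨ ε ^ 2 = -1 := by
  simp only [Set.mem_insert_iff, Set.mem_singleton_iff] at hε
  rcases hε with rfl | rfl | rfl | rfl
  · left; norm_num
  · left; norm_num
  · right; simp [Complex.I_sq]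
  · right; simp [Complex.I_sq]

lemma eps_ne_zero (hε : ε ∈ ({1, -1, Complex.I, -Complex.I} : Set ℂ)) : ε ≠ 0 := by
  simp only [Set.mem_insert_iff, Set.mem_singleton_iff] at hε
  rcases hε with rfl | rfl | rfl | rfl <;> simp [Complex.I_ne_zero]

lemma eps_sq_inv (hε : ε ∈ ({1, -1, Complex.I, -Complex.I} : Set ℂ)) :
    (ε ^ 2)⁻¹ = ε ^ 2 := by
  rcases eps_sq hε with h | h <;> rw [h] <;> norm_num

lemma eps_cases (hε : ε ∈ ({1, -1, Complex.I, -Complex.I} : Set ℂ))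
    (hε' : ε' ∈ ({1, -1, Complex.I, -Complex.I} : Set ℂ))
    (hcase : (ε ∈ ({1, -1} : Set ℂ) ∧ ε' ∈ ({1, -1} : Set ℂ)) ∨
             (ε ∈ ({Complex.I, -Complex.I} : Set ℂ) ∧ ε' ∈ ({Complex.I, -Complex.I} : Set ℂ)) ∨
             ¬ Even (l + l')) :
    ε ^ 2 * ε' ^ 2 = 1 ∨ (ε ^ 2 * ε' ^ 2 = -1 ∧ ¬ Even (l + l')) := by
  rcases hcase with ⟨ha, hb⟩ | ⟨ha, hb⟩ | hodd
  · left
    simp only [Set.mem_insert_iff, Set.mem_singleton_iff] at ha hb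
    rcases ha with rfl | rfl <;> rcases hb with rfl | rfl <;> norm_num
  · left
    simp only [Set.mem_insert_iff, Set.mem_singleton_iff] at ha hb
    rcases ha with rfl | rfl <;> rcases hb with rfl | rfl <;> simp [Complex.I_sq] <;> ring_nf
      <;> simp [Complex.I_sq]
  · rcases eps_sq hε with h1 | h1 <;> rcases eps_sq hε' with h2 | h2
    · left; rw [h1, h2]; norm_num
    · right; exact ⟨by rw [h1, h2]; norm_num, hodd⟩
    · right; exact ⟨by rw [h1, h2]; norm_num, hodd⟩
    · left; rw [h1, h2]; norm_num

lemma mem_tSupp {p : ℤ × ℤ} (hp : p ∈ tSupp l l') :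
    -l ≤ p.1 ∧ p.1 ≤ l ∧ (l - p.1) % 2 = 0 ∧ -l' ≤ p.2 ∧ p.2 ≤ l' ∧ (l' - p.2) % 2 = 0 := by
  simp only [tSupp, Finset.mem_product, mSupp, Finset.mem_filter, Finset.mem_Icc] at hp
  exact ⟨hp.1.1.1, hp.1.1.2, hp.1.2, hp.2.1.1, hp.2.1.2, hp.2.2⟩

section NonVanish

variable (hq0 : q ≠ 0) (hq1 : q ≠ 1) (hqm1 : q ≠ -1)
  (hroot : ∀ n : ℕ, 1 ≤ n → q ^ n ≠ 1) (hs : s ^ 2 = q)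
  (hε : ε ∈ ({1, -1, Complex.I, -Complex.I} : Set ℂ))
  (hε' : ε' ∈ ({1, -1, Complex.I, -Complex.I} : Set ℂ))
  (hcase : (ε ∈ ({1, -1} : Set ℂ) ∧ ε' ∈ ({1, -1} : Set ℂ)) ∨
           (ε ∈ ({Complex.I, -Complex.I} : Set ℂ) ∧ ε' ∈ ({Complex.I, -Complex.I} : Set ℂ)) ∨
           ¬ Even (l + l'))
include hq0 hq1 hqm1 hroot hs hε hε' hcase

lemma key_contra {N : ℤ} (hpar : ¬ Even (l + l') → ¬ Even N)
    (h : ε ^ 2 * ε' ^ 2 * q ^ N = -1) : False := by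
  rcases eps_cases (l := l) (l' := l') hε hε' hcase with hE | ⟨hE, hodd⟩
  · rw [hE, one_mul] at h
    exact zpow_ne_negone hq0 hroot N h
  · rw [hE] at h
    have h1 : q ^ N = 1 := by linear_combination -h
    have h2 : N = 0 := zpow_eq_zero_exp hq0 hroot h1
    exact (hpar hodd) (by rw [h2]; exact Even.zero)

lemma kapP_ne_zero (j : ℤ) {p : ℤ × ℤ} (hp : p ∈ tSupp l l') :
    kapP q s ε ε' j p ≠ 0 := by
  intro h
  have hs0 : s ≠ 0 := s_ne_zero hq0 hs
  have hε0 : ε ≠ 0 := eps_ne_zero hε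
  have hε'0 : ε' ≠ 0 := eps_ne_zero hε'
  obtain ⟨m, m'⟩ := p
  obtain ⟨h1, h2, h3, h4, h5, h6⟩ := mem_tSupp hp
  simp only at h1 h2 h3 h4 h5 h6
  set X : ℂ := q ^ j * (ε * s ^ m * (ε' * s ^ m')) with hXdef
  have hX0 : X ≠ 0 := by
    apply mul_ne_zero (zpow_ne_zero _ hq0)
    exact mul_ne_zero (mul_ne_zero hε0 (zpow_ne_zero _ hs0))
      (mul_ne_zero hε'0 (zpow_ne_zero _ hs0))
  have hX : X + X⁻¹ = 0 := by
    have hXinv : X⁻¹ = q ^ (-j) * ((ε * s ^ m)⁻¹ * (ε' * s ^ m')⁻¹) := by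
      rw [hXdef, mul_inv, mul_inv, zpow_neg]
    rw [hXinv, hXdef]
    rw [kapP] at h
    simpa only [kap1, kap2] using h
  have hX2 : X ^ 2 = -1 := by
    have e1 : X ^ 2 + 1 = X * (X + X⁻¹) := by field_simp
    rw [hX, mul_zero] at e1
    linear_combination e1
  have hX2' : X ^ 2 = ε ^ 2 * ε' ^ 2 * q ^ (2 * j + (m + m')) := by
    have e1 : (s ^ m) ^ 2 = q ^ m := by
      rw [sq, ← zpow_add₀ hs0, show m + m = 2 * m by ring, s_sq_zpow hq0 hs]
    have e2 : (s ^ m') ^ 2 = q ^ m' := by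
      rw [sq, ← zpow_add₀ hs0, show m' + m' = 2 * m' by ring, s_sq_zpow hq0 hs]
    have e3 : (q ^ j) ^ 2 = q ^ (2 * j) := by
      rw [sq, ← zpow_add₀ hq0, two_mul]
    rw [hXdef]
    simp only [mul_pow]
    rw [e1, e2, e3]
    rw [show 2 * j + (m + m') = 2 * j + m + m' by ring, zpow_add₀ hq0, zpow_add₀ hq0]
    ring
  refine key_contra (l := l) (l' := l') hq0 hq1 hqm1 hroot hs hε hε' hcase
    (N := 2 * j + (m + m')) ?_ (by rw [← hX2', hX2])
  intro hodd hev
  rw [Int.even_iff] at hodd hev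
  omega

lemma kapQ_ne_zero (j : ℤ) {p : ℤ × ℤ} (hp : p ∈ tSupp l l') :
    kapQ q s ε ε' j p ≠ 0 := by
  intro h
  have hs0 : s ≠ 0 := s_ne_zero hq0 hs
  have hε0 : ε ≠ 0 := eps_ne_zero hε
  have hε'0 : ε' ≠ 0 := eps_ne_zero hε'
  obtain ⟨m, m'⟩ := p
  obtain ⟨h1, h2, h3, h4, h5, h6⟩ := mem_tSupp hp
  simp only at h1 h2 h3 h4 h5 h6
  set X : ℂ := q ^ j * (ε * s ^ m * (ε' * s ^ m')⁻¹) with hXdef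
  have hX0 : X ≠ 0 := by
    apply mul_ne_zero (zpow_ne_zero _ hq0)
    exact mul_ne_zero (mul_ne_zero hε0 (zpow_ne_zero _ hs0))
      (inv_ne_zero (mul_ne_zero hε'0 (zpow_ne_zero _ hs0)))
  have hX : X + X⁻¹ = 0 := by
    have hXinv : X⁻¹ = q ^ (-j) * ((ε * s ^ m)⁻¹ * (ε' * s ^ m')) := by
      rw [hXdef, mul_inv, mul_inv, inv_inv, zpow_neg]
    rw [hXinv, hXdef]
    rw [kapQ] at h
    simpa only [kap1, kap2] using h
  have hX2 : X ^ 2 = -1 := by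
    have e1 : X ^ 2 + 1 = X * (X + X⁻¹) := by field_simp
    rw [hX, mul_zero] at e1
    linear_combination e1
  have hX2' : X ^ 2 = ε ^ 2 * ε' ^ 2 * q ^ (2 * j + (m - m')) := by
    have e1 : (s ^ m) ^ 2 = q ^ m := by
      rw [sq, ← zpow_add₀ hs0, show m + m = 2 * m by ring, s_sq_zpow hq0 hs]
    have e2 : (s ^ m') ^ 2 = q ^ m' := by
      rw [sq, ← zpow_add₀ hs0, show m' + m' = 2 * m' by ring, s_sq_zpow hq0 hs]
    have e3 : (q ^ j) ^ 2 = q ^ (2 * j) := by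
      rw [sq, ← zpow_add₀ hq0, two_mul]
    rw [hXdef]
    simp only [mul_pow, inv_pow]
    rw [e1, e2, e3, mul_inv, eps_sq_inv hε', ← zpow_neg q m']
    rw [show 2 * j + (m - m') = 2 * j + m + (-m') by ring, zpow_add₀ hq0, zpow_add₀ hq0]
    ring
  refine key_contra (l := l) (l' := l') hq0 hq1 hqm1 hroot hs hε hε' hcase
    (N := 2 * j + (m - m')) ?_ (by rw [← hX2', hX2])
  intro hodd hev
  rw [Int.even_iff] at hodd hev
  omega

end NonVanish

lemma kap1_mk {m m' : ℤ} : kap1 s ε (m, m') = ε * s ^ m := rfl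
lemma kap2_mk {m m' : ℤ} : kap2 s ε' (m, m') = ε' * s ^ m' := rfl

lemma kapP_mk {j m m' : ℤ} : kapP q s ε ε' j (m, m') =
    q ^ j * (ε * s ^ m * (ε' * s ^ m')) + q ^ (-j) * ((ε * s ^ m)⁻¹ * (ε' * s ^ m')⁻¹) := rfl

lemma kapQ_mk {j m m' : ℤ} : kapQ q s ε ε' j (m, m') =
    q ^ j * (ε * s ^ m * (ε' * s ^ m')⁻¹) + q ^ (-j) * ((ε * s ^ m)⁻¹ * (ε' * s ^ m')) := rfl

lemma shiftP_core (A r r' t1 t2 : ℂ) (hA : A ≠ 0) (hr : r ≠ 0) (hr' : r' ≠ 0)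
    (h1 : t1 ≠ 0) (h2 : t2 ≠ 0) :
    A * (t1 * r * (t2 * r')) + A⁻¹ * ((t1 * r)⁻¹ * (t2 * r')⁻¹)
      = A * r * r' * (t1 * t2) + (A * r * r')⁻¹ * (t1⁻¹ * t2⁻¹) := by
  field_simp

lemma shiftQ_core (A r r' t1 t2 : ℂ) (hA : A ≠ 0) (hr : r ≠ 0) (hr' : r' ≠ 0)
    (h1 : t1 ≠ 0) (h2 : t2 ≠ 0) :
    A * (t1 * r * (t2 * r')⁻¹) + A⁻¹ * ((t1 * r)⁻¹ * (t2 * r'))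
      = A * r * r'⁻¹ * (t1 * t2⁻¹) + (A * r)⁻¹ * r' * (t1⁻¹ * t2) := by
  field_simp

section Shift

variable (hq0 : q ≠ 0) (hs : s ^ 2 = q) (hε0 : ε ≠ 0) (hε'0 : ε' ≠ 0)
include hq0 hs hε0 hε'0

lemma kapP_shift (j m m' c c' : ℤ) :
    kapP q s ε ε' j (m + 2 * c, m' + 2 * c') = kapP q s ε ε' (j + c + c') (m, m') := by
  have hs0 : s ≠ 0 := s_ne_zero hq0 hs
  have n1 : q ^ j ≠ 0 := zpow_ne_zero _ hq0
  have n2 : q ^ c ≠ 0 := zpow_ne_zero _ hq0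
  have n3 : q ^ c' ≠ 0 := zpow_ne_zero _ hq0
  have n4 : s ^ m ≠ 0 := zpow_ne_zero _ hs0
  have n5 : s ^ m' ≠ 0 := zpow_ne_zero _ hs0
  rw [kapP_mk, kapP_mk, zpow_neg q (j + c + c'), zpow_neg q j,
    zpow_add₀ hs0 m (2 * c), s_sq_zpow hq0 hs, zpow_add₀ hs0 m' (2 * c'), s_sq_zpow hq0 hs,
    zpow_add₀ hq0 (j + c) c', zpow_add₀ hq0 j c]
  linear_combination shiftP_core (q ^ j) (q ^ c) (q ^ c') (ε * s ^ m) (ε' * s ^ m')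
    n1 n2 n3 (mul_ne_zero hε0 n4) (mul_ne_zero hε'0 n5)

lemma kapQ_shift (j m m' c c' : ℤ) :
    kapQ q s ε ε' j (m + 2 * c, m' + 2 * c') = kapQ q s ε ε' (j + c - c') (m, m') := by
  have hs0 : s ≠ 0 := s_ne_zero hq0 hs
  have n1 : q ^ j ≠ 0 := zpow_ne_zero _ hq0
  have n2 : q ^ c ≠ 0 := zpow_ne_zero _ hq0
  have n3 : q ^ c' ≠ 0 := zpow_ne_zero _ hq0
  have n4 : s ^ m ≠ 0 := zpow_ne_zero _ hs0
  have n5 : s ^ m' ≠ 0 := zpow_ne_zero _ hs0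
  rw [kapQ_mk, kapQ_mk, show j + c - c' = j + c + -c' by ring,
    show -(j + c + -c') = -j + -c + c' by ring,
    zpow_add₀ hq0 (j + c) (-c'), zpow_add₀ hq0 j c,
    zpow_add₀ hq0 (-j + -c) c', zpow_add₀ hq0 (-j) (-c),
    zpow_neg q j, zpow_neg q c, zpow_neg q c',
    zpow_add₀ hs0 m (2 * c), s_sq_zpow hq0 hs, zpow_add₀ hs0 m' (2 * c'), s_sq_zpow hq0 hs]
  linear_combination shiftQ_core (q ^ j) (q ^ c) (q ^ c') (ε * s ^ m) (ε' * s ^ m')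
    n1 n2 n3 (mul_ne_zero hε0 n4) (mul_ne_zero hε'0 n5)

end Shift

section Rep

variable {T : Uhat2 q →ₐ[ℂ] Module.End ℂ (↥(tSupp l l') → ℂ)}
variable (hT : IsTensorRep q s l l' ε ε' T)
include hT

lemma TK0_eq : T (gen2 q (QG.K 0)) = diag l l' (kap1 s ε) := by
  apply end_ext; intro m m' hp; rw [diag_tvec]; exact (hT m m' hp).1

lemma TKi0_eq : T (gen2 q (QG.Ki 0)) = diag l l' (fun p => (kap1 s ε p)⁻¹) := by
  apply end_ext; intro m m' hp; rw [diag_tvec]; exact (hT m m' hp).2.1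

lemma Tx0_eq : T (gen2 q (QG.x 0)) = diag l l' (fun _ => s ^ (-l)) := by
  apply end_ext; intro m m' hp; rw [diag_tvec]; exact (hT m m' hp).2.2.2.2.1

lemma TK1_eq : T (gen2 q (QG.K 1)) = diag l l' (kap2 s ε') := by
  apply end_ext; intro m m' hp; rw [diag_tvec]; exact (hT m m' hp).2.2.2.2.2.1

lemma TKi1_eq : T (gen2 q (QG.Ki 1)) = diag l l' (fun p => (kap2 s ε' p)⁻¹) := by
  apply end_ext; intro m m' hp; rw [diag_tvec]; exact (hT m m' hp).2.2.2.2.2.2.1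

lemma Tx1_eq : T (gen2 q (QG.x 1)) = diag l l' (fun _ => s ^ (-l')) := by
  apply end_ext; intro m m' hp; rw [diag_tvec]; exact (hT m m' hp).2.2.2.2.2.2.2.2.2

lemma TP2_eq (j : ℤ) : T (P2 q j) = diag l l' (kapP q s ε ε' j) := by
  rw [P2, map_add, map_smul, map_smul, map_mul, map_mul,
    TK0_eq hT, TK1_eq hT, TKi0_eq hT, TKi1_eq hT,
    diag_mul, diag_mul, diag_smul, diag_smul, diag_add]
  rfl

lemma TQ2_eq (j : ℤ) : T (Q2 q j) = diag l l' (kapQ q s ε ε' j) := by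
  rw [Q2, map_add, map_smul, map_smul, map_mul, map_mul,
    TK0_eq hT, TKi1_eq hT, TKi0_eq hT, TK1_eq hT,
    diag_mul, diag_mul, diag_smul, diag_smul, diag_add]
  rfl

end Rep

lemma fSign_ne_zero (ε : ℂ) : fSign ε ≠ 0 := by
  rw [fSign]; split <;> norm_num

def ren : FreeAlgebra ℂ QG →ₐ[ℂ] FreeAlgebra ℂ QGE :=
  FreeAlgebra.lift ℂ ExtFree.g

lemma ren_ι (a : QG) : ren (FreeAlgebra.ι ℂ a) = ExtFree.g a := by
  simp [ren]

lemma fin2 (i : Fin 2) : i = 0 ∨ i = 1 := by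
  fin_cases i
  · exact Or.inl rfl
  · exact Or.inr rfl

lemma baseRel_transport {q : ℂ} {a b : FreeAlgebra ℂ QGE} (h : BaseRel q ExtFree.g a b) :
    ∃ a₀ b₀ : FreeAlgebra ℂ QG,
      BaseRel q (FreeAlgebra.ι ℂ) a₀ b₀ ∧ ren a₀ = a ∧ ren b₀ = b := by
  cases h with
  | KKi i => exact ⟨_, _, BaseRel.KKi (g := FreeAlgebra.ι ℂ) i, by simp [map_mul, ren_ι], by simp⟩
  | KiK i => exact ⟨_, _, BaseRel.KiK (g := FreeAlgebra.ι ℂ) i, by simp [map_mul, ren_ι], by simp⟩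
  | Ke i => exact ⟨_, _, BaseRel.Ke (g := FreeAlgebra.ι ℂ) i,
      by simp [map_mul, ren_ι], by simp [map_smul, map_mul, ren_ι]⟩
  | Kf i => exact ⟨_, _, BaseRel.Kf (g := FreeAlgebra.ι ℂ) i,
      by simp [map_mul, ren_ι], by simp [map_smul, map_mul, ren_ι]⟩
  | ef i => exact ⟨_, _, BaseRel.ef (g := FreeAlgebra.ι ℂ) i,
      by simp [map_sub, map_mul, ren_ι], by simp [map_smul, map_sub, map_pow, ren_ι]⟩
  | xe i => exact ⟨_, _, BaseRel.xe (g := FreeAlgebra.ι ℂ) i,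
      by simp [map_mul, ren_ι], by simp [map_mul, ren_ι]⟩
  | xf i => exact ⟨_, _, BaseRel.xf (g := FreeAlgebra.ι ℂ) i,
      by simp [map_mul, ren_ι], by simp [map_mul, ren_ι]⟩
  | xK i => exact ⟨_, _, BaseRel.xK (g := FreeAlgebra.ι ℂ) i,
      by simp [map_mul, ren_ι], by simp [map_mul, ren_ι]⟩
  | xKi i => exact ⟨_, _, BaseRel.xKi (g := FreeAlgebra.ι ℂ) i,
      by simp [map_mul, ren_ι], by simp [map_mul, ren_ι]⟩
  | quartic i =>
      refine ⟨_, _, BaseRel.quartic (g := FreeAlgebra.ι ℂ) i, ?_, by simp⟩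
      simp [map_add, map_sub, map_smul, map_mul, map_pow, casFree, ren_ι]
  | cross a b ha hb => exact ⟨_, _, BaseRel.cross (g := FreeAlgebra.ι ℂ) a b ha hb,
      by simp [map_mul, ren_ι], by simp [map_mul, ren_ι]⟩

def Fq (q s ε ε' : ℂ) (l l' : ℤ) (T : Uhat2 q →ₐ[ℂ] Module.End ℂ (↥(tSupp l l') → ℂ)) :
    FreeAlgebra ℂ QGE →ₐ[ℂ] Module.End ℂ (↥(tSupp l l') → ℂ) :=
  FreeAlgebra.lift ℂ (fun x => match x with
    | QGE.base a => T (gen2 q a)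
    | QGE.u j => diag l l' (fun p => (kapP q s ε ε' j p)⁻¹)
    | QGE.v j => diag l l' (fun p => (kapQ q s ε ε' j p)⁻¹))

variable {T : Uhat2 q →ₐ[ℂ] Module.End ℂ (↥(tSupp l l') → ℂ)}

lemma Fq_base (a : QG) : Fq q s ε ε' l l' T (ExtFree.g a) = T (gen2 q a) := by
  simp [Fq, ExtFree.g]

lemma Fq_u (j : ℤ) :
    Fq q s ε ε' l l' T (ExtFree.U j) = diag l l' (fun p => (kapP q s ε ε' j p)⁻¹) := by
  simp [Fq, ExtFree.U]

lemma Fq_v (j : ℤ) :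
    Fq q s ε ε' l l' T (ExtFree.V j) = diag l l' (fun p => (kapQ q s ε ε' j p)⁻¹) := by
  simp [Fq, ExtFree.V]

lemma Fq_comp_ren :
    (Fq q s ε ε' l l' T).comp ren
      = T.comp (RingQuot.mkAlgHom ℂ (BaseRel q (FreeAlgebra.ι ℂ))) := by
  apply FreeAlgebra.hom_ext
  funext a
  simp only [Function.comp_apply, AlgHom.comp_apply, ren_ι, Fq_base]
  rfl

section RelCheck

variable (hq0 : q ≠ 0) (hq1 : q ≠ 1) (hqm1 : q ≠ -1)
  (hroot : ∀ n : ℕ, 1 ≤ n → q ^ n ≠ 1) (hs : s ^ 2 = q)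
  (hε : ε ∈ ({1, -1, Complex.I, -Complex.I} : Set ℂ))
  (hε' : ε' ∈ ({1, -1, Complex.I, -Complex.I} : Set ℂ))
  (hcase : (ε ∈ ({1, -1} : Set ℂ) ∧ ε' ∈ ({1, -1} : Set ℂ)) ∨
           (ε ∈ ({Complex.I, -Complex.I} : Set ℂ) ∧ ε' ∈ ({Complex.I, -Complex.I} : Set ℂ)) ∨
           ¬ Even (l + l'))
  (hT : IsTensorRep q s l l' ε ε' T)
include hq0 hq1 hqm1 hroot hs hε hε' hcase hT

lemma FP_eq (j : ℤ) :
    Fq q s ε ε' l l' T (ExtFree.P q j) = diag l l' (kapP q s ε ε' j) := by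
  rw [ExtFree.P, map_add, map_smul, map_smul, map_mul, map_mul,
    Fq_base, Fq_base, Fq_base, Fq_base,
    TK0_eq hT, TK1_eq hT, TKi0_eq hT, TKi1_eq hT,
    diag_mul, diag_mul, diag_smul, diag_smul, diag_add]
  rfl

lemma FQ_eq (j : ℤ) :
    Fq q s ε ε' l l' T (ExtFree.Q q j) = diag l l' (kapQ q s ε ε' j) := by
  rw [ExtFree.Q, map_add, map_smul, map_smul, map_mul, map_mul,
    Fq_base, Fq_base, Fq_base, Fq_base,
    TK0_eq hT, TKi1_eq hT, TKi0_eq hT, TK1_eq hT,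
    diag_mul, diag_mul, diag_smul, diag_smul, diag_add]
  rfl

lemma Fq_rel {a b : FreeAlgebra ℂ QGE} (h : ExtRel q a b) :
    Fq q s ε ε' l l' T a = Fq q s ε ε' l l' T b := by
  have hε0 : ε ≠ 0 := eps_ne_zero hε
  have hε'0 : ε' ≠ 0 := eps_ne_zero hε'
  have hPup1 : ∀ j m m' : ℤ, kapP q s ε ε' j (m + 2, m') = kapP q s ε ε' (j + 1) (m, m') := by
    intro j m m'; have h := kapP_shift hq0 hs hε0 hε'0 j m m' 1 0; norm_num at h; exact h
  have hPdn1 : ∀ j m m' : ℤ, kapP q s ε ε' j (m - 2, m') = kapP q s ε ε' (j - 1) (m, m') := by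
    intro j m m'; have h := kapP_shift hq0 hs hε0 hε'0 j m m' (-1) 0; norm_num at h
    rw [show m - 2 = m + -2 by ring, show j - 1 = j + -1 by ring]; exact h
  have hPup2 : ∀ j m m' : ℤ, kapP q s ε ε' j (m, m' + 2) = kapP q s ε ε' (j + 1) (m, m') := by
    intro j m m'; have h := kapP_shift hq0 hs hε0 hε'0 j m m' 0 1; norm_num at h; exact h
  have hPdn2 : ∀ j m m' : ℤ, kapP q s ε ε' j (m, m' - 2) = kapP q s ε ε' (j - 1) (m, m') := by
    intro j m m'; have h := kapP_shift hq0 hs hε0 hε'0 j m m' 0 (-1); norm_num at h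
    rw [show m' - 2 = m' + -2 by ring, show j - 1 = j + -1 by ring]; exact h
  have hQup1 : ∀ j m m' : ℤ, kapQ q s ε ε' j (m + 2, m') = kapQ q s ε ε' (j + 1) (m, m') := by
    intro j m m'; have h := kapQ_shift hq0 hs hε0 hε'0 j m m' 1 0; norm_num at h; exact h
  have hQdn1 : ∀ j m m' : ℤ, kapQ q s ε ε' j (m - 2, m') = kapQ q s ε ε' (j - 1) (m, m') := by
    intro j m m'; have h := kapQ_shift hq0 hs hε0 hε'0 j m m' (-1) 0; norm_num at h
    rw [show m - 2 = m + -2 by ring, show j - 1 = j + -1 by ring]; exact h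
  have hQup2 : ∀ j m m' : ℤ, kapQ q s ε ε' j (m, m' + 2) = kapQ q s ε ε' (j - 1) (m, m') := by
    intro j m m'; have h := kapQ_shift hq0 hs hε0 hε'0 j m m' 0 1; norm_num at h
    exact h
  have hQdn2 : ∀ j m m' : ℤ, kapQ q s ε ε' j (m, m' - 2) = kapQ q s ε ε' (j + 1) (m, m') := by
    intro j m m'; have h := kapQ_shift hq0 hs hε0 hε'0 j m m' 0 (-1); norm_num at h
    rw [show m' - 2 = m' + -2 by ring]; exact h
  cases h with
  | ofBase hb =>
      obtain ⟨a₀, b₀, h₀, ha, hb'⟩ := baseRel_transport hb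
      rw [← ha, ← hb']
      have : (Fq q s ε ε' l l' T).comp ren a₀ = (Fq q s ε ε' l l' T).comp ren b₀ := by
        rw [Fq_comp_ren]
        simp only [AlgHom.comp_apply]
        exact congrArg T (RingQuot.mkAlgHom_rel ℂ h₀)
      simpa using this
  | uInvL j =>
      rw [map_mul, map_one, Fq_u, FP_eq hq0 hq1 hqm1 hroot hs hε hε' hcase hT]
      exact diag_inv_mul (fun p hp => kapP_ne_zero hq0 hq1 hqm1 hroot hs hε hε' hcase j hp)
  | uInvR j =>
      rw [map_mul, map_one, Fq_u, FP_eq hq0 hq1 hqm1 hroot hs hε hε' hcase hT]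
      exact diag_mul_inv (fun p hp => kapP_ne_zero hq0 hq1 hqm1 hroot hs hε hε' hcase j hp)
  | vInvL j =>
      rw [map_mul, map_one, Fq_v, FQ_eq hq0 hq1 hqm1 hroot hs hε hε' hcase hT]
      exact diag_inv_mul (fun p hp => kapQ_ne_zero hq0 hq1 hqm1 hroot hs hε hε' hcase j hp)
  | vInvR j =>
      rw [map_mul, map_one, Fq_v, FQ_eq hq0 hq1 hqm1 hroot hs hε hε' hcase hT]
      exact diag_mul_inv (fun p hp => kapQ_ne_zero hq0 hq1 hqm1 hroot hs hε hε' hcase j hp)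
  | uK j i =>
      rw [map_mul, map_mul, Fq_u, Fq_base]
      rcases fin2 i with rfl | rfl
      · rw [TK0_eq hT]; exact diag_comm _ _
      · rw [TK1_eq hT]; exact diag_comm _ _
  | uKi j i =>
      rw [map_mul, map_mul, Fq_u, Fq_base]
      rcases fin2 i with rfl | rfl
      · rw [TKi0_eq hT]; exact diag_comm _ _
      · rw [TKi1_eq hT]; exact diag_comm _ _
  | ux j i =>
      rw [map_mul, map_mul, Fq_u, Fq_base]
      rcases fin2 i with rfl | rfl
      · rw [Tx0_eq hT]; exact diag_comm _ _
      · rw [Tx1_eq hT]; exact diag_comm _ _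
  | vK j i =>
      rw [map_mul, map_mul, Fq_v, Fq_base]
      rcases fin2 i with rfl | rfl
      · rw [TK0_eq hT]; exact diag_comm _ _
      · rw [TK1_eq hT]; exact diag_comm _ _
  | vKi j i =>
      rw [map_mul, map_mul, Fq_v, Fq_base]
      rcases fin2 i with rfl | rfl
      · rw [TKi0_eq hT]; exact diag_comm _ _
      · rw [TKi1_eq hT]; exact diag_comm _ _
  | vx j i =>
      rw [map_mul, map_mul, Fq_v, Fq_base]
      rcases fin2 i with rfl | rfl
      · rw [Tx0_eq hT]; exact diag_comm _ _
      · rw [Tx1_eq hT]; exact diag_comm _ _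
  | ue j i =>
      rw [map_mul, map_mul, Fq_u, Fq_u, Fq_base]
      rcases fin2 i with rfl | rfl
      · apply end_ext; intro m m' hp
        simp only [Module.End.mul_apply, diag_tvec, map_smul, (hT m m' hp).2.2.1, diag_tvec,
          smul_smul]
        rw [hPup1 j m m']
        congr 1; ring
      · apply end_ext; intro m m' hp
        simp only [Module.End.mul_apply, diag_tvec, map_smul,
          (hT m m' hp).2.2.2.2.2.2.2.1, diag_tvec, smul_smul]
        rw [hPup2 j m m']
        congr 1; ring
  | uf j i =>
      rw [map_mul, map_mul, Fq_u, Fq_u, Fq_base]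
      rcases fin2 i with rfl | rfl
      · apply end_ext; intro m m' hp
        simp only [Module.End.mul_apply, diag_tvec, map_smul, (hT m m' hp).2.2.2.1, diag_tvec,
          smul_smul]
        rw [hPdn1 j m m']
        congr 1; ring
      · apply end_ext; intro m m' hp
        simp only [Module.End.mul_apply, diag_tvec, map_smul,
          (hT m m' hp).2.2.2.2.2.2.2.2.1, diag_tvec, smul_smul]
        rw [hPdn2 j m m']
        congr 1; ring
  | ve1 j =>
      rw [map_mul, map_mul, Fq_v, Fq_v, Fq_base]
      apply end_ext; intro m m' hp
      simp only [Module.End.mul_apply, diag_tvec, map_smul, (hT m m' hp).2.2.1, diag_tvec,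
        smul_smul]
      rw [hQup1 j m m']
      congr 1; ring
  | vf1 j =>
      rw [map_mul, map_mul, Fq_v, Fq_v, Fq_base]
      apply end_ext; intro m m' hp
      simp only [Module.End.mul_apply, diag_tvec, map_smul, (hT m m' hp).2.2.2.1, diag_tvec,
        smul_smul]
      rw [hQdn1 j m m']
      congr 1; ring
  | ve2 j =>
      rw [map_mul, map_mul, Fq_v, Fq_v, Fq_base]
      apply end_ext; intro m m' hp
      simp only [Module.End.mul_apply, diag_tvec, map_smul,
        (hT m m' hp).2.2.2.2.2.2.2.1, diag_tvec, smul_smul]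
      rw [hQup2 j m m']
      congr 1; ring
  | vf2 j =>
      rw [map_mul, map_mul, Fq_v, Fq_v, Fq_base]
      apply end_ext; intro m m' hp
      simp only [Module.End.mul_apply, diag_tvec, map_smul,
        (hT m m' hp).2.2.2.2.2.2.2.2.1, diag_tvec, smul_smul]
      rw [hQdn2 j m m']
      congr 1; ring

end RelCheck

lemma mem_tSupp_iff {p : ℤ × ℤ} : p ∈ tSupp l l' ↔
    (-l ≤ p.1 ∧ p.1 ≤ l ∧ (l - p.1) % 2 = 0 ∧ -l' ≤ p.2 ∧ p.2 ≤ l' ∧ (l' - p.2) % 2 = 0) := by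
  simp only [tSupp, Finset.mem_product, mSupp, Finset.mem_filter, Finset.mem_Icc]
  tauto

lemma top_of_all_tvec (W : Submodule ℂ (↥(tSupp l l') → ℂ))
    (h : ∀ b : ↥(tSupp l l'), tvec l l' ↑b ∈ W) : W = ⊤ := by
  rw [eq_top_iff]
  intro v _
  rw [tvec_span v]
  exact Submodule.sum_mem _ (fun b _ => Submodule.smul_mem _ _ (h b))

section Irred

variable (hq0 : q ≠ 0) (hroot : ∀ n : ℕ, 1 ≤ n → q ^ n ≠ 1) (hs : s ^ 2 = q)
  (hε0 : ε ≠ 0) (hε'0 : ε' ≠ 0)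
include hq0 hroot hs

lemma kap1_inj (hε0 : ε ≠ 0) {p p' : ℤ × ℤ} (hp : p ∈ tSupp l l') (hp' : p' ∈ tSupp l l')
    (h : kap1 s ε p = kap1 s ε p') : p.1 = p'.1 := by
  have h1 := (mem_tSupp hp).2.2.1
  have h2 := (mem_tSupp hp').2.2.1
  rw [kap1, kap1] at h
  have h3 : s ^ p.1 = s ^ p'.1 := mul_left_cancel₀ hε0 h
  exact s_zpow_inj hq0 hroot hs (by omega) h3

lemma kap2_inj (hε'0 : ε' ≠ 0) {p p' : ℤ × ℤ} (hp : p ∈ tSupp l l') (hp' : p' ∈ tSupp l l')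
    (h : kap2 s ε' p = kap2 s ε' p') : p.2 = p'.2 := by
  have h1 := (mem_tSupp hp).2.2.2.2.2
  have h2 := (mem_tSupp hp').2.2.2.2.2
  rw [kap2, kap2] at h
  have h3 : s ^ p.2 = s ^ p'.2 := mul_left_cancel₀ hε'0 h
  exact s_zpow_inj hq0 hroot hs (by omega) h3

lemma stepA (hε0 : ε ≠ 0) (hε'0 : ε' ≠ 0) (W : Submodule ℂ (↥(tSupp l l') → ℂ))
    (hWK0 : ∀ v ∈ W, diag l l' (kap1 s ε) v ∈ W)
    (hWK1 : ∀ v ∈ W, diag l l' (kap2 s ε') v ∈ W) :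
    ∀ n : ℕ, ∀ w ∈ W, ∀ b : ↥(tSupp l l'), w b ≠ 0 →
      (Finset.univ.filter (fun c => w c ≠ 0)).card ≤ n → tvec l l' ↑b ∈ W := by
  intro n
  induction n with
  | zero =>
      intro w hw b hb hcard
      exfalso
      have hbmem : b ∈ Finset.univ.filter (fun c => w c ≠ 0) := by simp [hb]
      have := Finset.card_pos.mpr ⟨b, hbmem⟩
      omega
  | succ n IH =>
      intro w hw b hb hcard
      by_cases hone : ∀ c, w c ≠ 0 → c = b
      · have hveq : tvec l l' ↑b = (w b)⁻¹ • w := by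
          funext c
          by_cases hcb : c = b
          · subst hcb
            simp [tvec, inv_mul_cancel₀ hb]
          · have hwc : w c = 0 := by
              by_contra hc; exact hcb (hone c hc)
            simp only [tvec, Pi.smul_apply, smul_eq_mul, hwc, mul_zero]
            rw [if_neg (fun hcc => hcb (Subtype.ext hcc))]
        rw [hveq]
        exact W.smul_mem _ hw
      · push_neg at hone
        obtain ⟨b', hb'0, hb'b⟩ := hone
        have hbb : (↑b : ℤ × ℤ) ≠ ↑b' := fun h => hb'b (Subtype.ext h).symm
        have key : ∀ d : ℤ × ℤ → ℂ, (∀ v ∈ W, diag l l' d v ∈ W) → d ↑b ≠ d ↑b' →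
            tvec l l' ↑b ∈ W := by
          intro d hWd hdne
          set w1 : ↥(tSupp l l') → ℂ := fun c => (d ↑c - d ↑b') * w c with hw1def
          have hw1W : w1 ∈ W := by
            have heq : w1 = diag l l' d w - d ↑b' • w := by
              funext c
              simp only [hw1def, diag_apply, Pi.sub_apply, Pi.smul_apply, smul_eq_mul]
              ring
            rw [heq]
            exact W.sub_mem (hWd w hw) (W.smul_mem _ hw)
          have hw1b : w1 b ≠ 0 := mul_ne_zero (sub_ne_zero.mpr hdne) hb
          have hsub : Finset.univ.filter (fun c => w1 c ≠ 0)
              ⊆ (Finset.univ.filter (fun c => w c ≠ 0)).erase b' := by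
            intro c hc
            simp only [Finset.mem_filter, Finset.mem_univ, true_and, Finset.mem_erase] at hc ⊢
            refine ⟨?_, ?_⟩
            · intro hcb'
              subst hcb'
              exact hc (by simp [hw1def])
            · intro h0
              exact hc (by simp [hw1def, h0])
          have hb'mem : b' ∈ Finset.univ.filter (fun c => w c ≠ 0) := by simp [hb'0]
          have hcard1 : (Finset.univ.filter (fun c => w1 c ≠ 0)).card ≤ n := by
            have h1 := Finset.card_le_card hsub
            rw [Finset.card_erase_of_mem hb'mem] at h1
            have h2 := Finset.card_pos.mpr ⟨b', hb'mem⟩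
            omega
          exact IH w1 hw1W b hw1b hcard1
        rcases (show (↑b : ℤ × ℤ).1 ≠ (↑b' : ℤ × ℤ).1 ∨ (↑b : ℤ × ℤ).2 ≠ (↑b' : ℤ × ℤ).2 by
            by_contra hno; push_neg at hno; exact hbb (Prod.ext hno.1 hno.2)) with hc1 | hc2
        · exact key (kap1 s ε) hWK0
            (fun h => hc1 (kap1_inj hq0 hroot hs hε0 b.2 b'.2 h))
        · exact key (kap2 s ε') hWK1
            (fun h => hc2 (kap2_inj hq0 hroot hs hε'0 b.2 b'.2 h))

end Irred

section Move

variable (hq0 : q ≠ 0) (hq1 : q ≠ 1) (hqm1 : q ≠ -1)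
  (hroot : ∀ n : ℕ, 1 ≤ n → q ^ n ≠ 1) (hs : s ^ 2 = q)
variable {T : Uhat2 q →ₐ[ℂ] Module.End ℂ (↥(tSupp l l') → ℂ)}
variable (hT : IsTensorRep q s l l' ε ε' T)
variable (W : Submodule ℂ (↥(tSupp l l') → ℂ))
  (hWe0 : ∀ v ∈ W, T (gen2 q (QG.e 0)) v ∈ W)
  (hWf0 : ∀ v ∈ W, T (gen2 q (QG.f 0)) v ∈ W)
  (hWe1 : ∀ v ∈ W, T (gen2 q (QG.e 1)) v ∈ W)
  (hWf1 : ∀ v ∈ W, T (gen2 q (QG.f 1)) v ∈ W)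
include hq0 hq1 hqm1 hroot hs hT

include hWe0 in
lemma move_up0 {m m' : ℤ} (h1 : (m, m') ∈ tSupp l l') (h2 : (m + 2, m') ∈ tSupp l l')
    (hv : tvec l l' (m, m') ∈ W) : tvec l l' (m + 2, m') ∈ W := by
  have hb2 := (mem_tSupp_iff.mp h2).2.1
  have hc : qNum q s (l - m) ≠ 0 :=
    qNum_ne_zero hq0 hq1 hqm1 hroot hs (by simp only at hb2; omega)
  have h3 := hWe0 _ hv
  rw [(hT m m' h1).2.2.1] at h3
  have h4 := W.smul_mem (qNum q s (l - m))⁻¹ h3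
  rwa [smul_smul, inv_mul_cancel₀ hc, one_smul] at h4

include hWf0 in
lemma move_dn0 {m m' : ℤ} (h1 : (m, m') ∈ tSupp l l') (h2 : (m - 2, m') ∈ tSupp l l')
    (hv : tvec l l' (m, m') ∈ W) : tvec l l' (m - 2, m') ∈ W := by
  have hb2 := (mem_tSupp_iff.mp h2).1
  have hc : fSign ε * qNum q s (l + m) ≠ 0 :=
    mul_ne_zero (fSign_ne_zero ε)
      (qNum_ne_zero hq0 hq1 hqm1 hroot hs (by simp only at hb2; omega))
  have h3 := hWf0 _ hv
  rw [(hT m m' h1).2.2.2.1] at h3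
  have h4 := W.smul_mem (fSign ε * qNum q s (l + m))⁻¹ h3
  rwa [smul_smul, inv_mul_cancel₀ hc, one_smul] at h4

include hWe1 in
lemma move_up1 {m m' : ℤ} (h1 : (m, m') ∈ tSupp l l') (h2 : (m, m' + 2) ∈ tSupp l l')
    (hv : tvec l l' (m, m') ∈ W) : tvec l l' (m, m' + 2) ∈ W := by
  have hb2 := (mem_tSupp_iff.mp h2).2.2.2.2.1
  have hc : qNum q s (l' - m') ≠ 0 :=
    qNum_ne_zero hq0 hq1 hqm1 hroot hs (by simp only at hb2; omega)
  have h3 := hWe1 _ hv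
  rw [(hT m m' h1).2.2.2.2.2.2.2.1] at h3
  have h4 := W.smul_mem (qNum q s (l' - m'))⁻¹ h3
  rwa [smul_smul, inv_mul_cancel₀ hc, one_smul] at h4

include hWf1 in
lemma move_dn1 {m m' : ℤ} (h1 : (m, m') ∈ tSupp l l') (h2 : (m, m' - 2) ∈ tSupp l l')
    (hv : tvec l l' (m, m') ∈ W) : tvec l l' (m, m' - 2) ∈ W := by
  have hb2 := (mem_tSupp_iff.mp h2).2.2.2.1
  have hc : fSign ε' * qNum q s (l' + m') ≠ 0 :=
    mul_ne_zero (fSign_ne_zero ε')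
      (qNum_ne_zero hq0 hq1 hqm1 hroot hs (by simp only at hb2; omega))
  have h3 := hWf1 _ hv
  rw [(hT m m' h1).2.2.2.2.2.2.2.2.1] at h3
  have h4 := W.smul_mem (fSign ε' * qNum q s (l' + m'))⁻¹ h3
  rwa [smul_smul, inv_mul_cancel₀ hc, one_smul] at h4

include hWe0 in
lemma move_up0_iter (k : ℕ) : ∀ m m' : ℤ, (m, m') ∈ tSupp l l' →
    (m + 2 * k, m') ∈ tSupp l l' → tvec l l' (m, m') ∈ W →
    tvec l l' (m + 2 * k, m') ∈ W := by
  induction k with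
  | zero => intro m m' h1 h2 hv; simpa using hv
  | succ k IH =>
      intro m m' h1 h2 hv
      have hm1 := mem_tSupp_iff.mp h1
      have hm2 := mem_tSupp_iff.mp h2
      have hmid : (m + 2 * k, m') ∈ tSupp l l' := by
        rw [mem_tSupp_iff]
        simp only at hm1 hm2 ⊢
        omega
      have hstep := move_up0 hq0 hq1 hqm1 hroot hs hT W hWe0 hmid
        (by rw [show m + 2 * k + 2 = m + 2 * (k + 1 : ℕ) by push_cast; ring]; exact h2) (IH m m' h1 hmid hv)
      rw [show (m + 2 * (k + 1 : ℕ) : ℤ) = m + 2 * k + 2 by push_cast; ring]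
      exact hstep

include hWf0 in
lemma move_dn0_iter (k : ℕ) : ∀ m m' : ℤ, (m, m') ∈ tSupp l l' →
    (m - 2 * k, m') ∈ tSupp l l' → tvec l l' (m, m') ∈ W →
    tvec l l' (m - 2 * k, m') ∈ W := by
  induction k with
  | zero => intro m m' h1 h2 hv; simpa using hv
  | succ k IH =>
      intro m m' h1 h2 hv
      have hm1 := mem_tSupp_iff.mp h1
      have hm2 := mem_tSupp_iff.mp h2
      have hmid : (m - 2 * k, m') ∈ tSupp l l' := by
        rw [mem_tSupp_iff]
        simp only at hm1 hm2 ⊢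
        omega
      have hstep := move_dn0 hq0 hq1 hqm1 hroot hs hT W hWf0 hmid
        (by rw [show m - 2 * k - 2 = m - 2 * (k + 1 : ℕ) by push_cast; ring]; exact h2) (IH m m' h1 hmid hv)
      rw [show (m - 2 * (k + 1 : ℕ) : ℤ) = m - 2 * k - 2 by push_cast; ring]
      exact hstep

include hWe1 in
lemma move_up1_iter (k : ℕ) : ∀ m m' : ℤ, (m, m') ∈ tSupp l l' →
    (m, m' + 2 * k) ∈ tSupp l l' → tvec l l' (m, m') ∈ W →
    tvec l l' (m, m' + 2 * k) ∈ W := by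
  induction k with
  | zero => intro m m' h1 h2 hv; simpa using hv
  | succ k IH =>
      intro m m' h1 h2 hv
      have hm1 := mem_tSupp_iff.mp h1
      have hm2 := mem_tSupp_iff.mp h2
      have hmid : (m, m' + 2 * k) ∈ tSupp l l' := by
        rw [mem_tSupp_iff]
        simp only at hm1 hm2 ⊢
        omega
      have hstep := move_up1 hq0 hq1 hqm1 hroot hs hT W hWe1 hmid
        (by rw [show m' + 2 * k + 2 = m' + 2 * (k + 1 : ℕ) by push_cast; ring]; exact h2) (IH m m' h1 hmid hv)
      rw [show (m' + 2 * (k + 1 : ℕ) : ℤ) = m' + 2 * k + 2 by push_cast; ring]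
      exact hstep

include hWf1 in
lemma move_dn1_iter (k : ℕ) : ∀ m m' : ℤ, (m, m') ∈ tSupp l l' →
    (m, m' - 2 * k) ∈ tSupp l l' → tvec l l' (m, m') ∈ W →
    tvec l l' (m, m' - 2 * k) ∈ W := by
  induction k with
  | zero => intro m m' h1 h2 hv; simpa using hv
  | succ k IH =>
      intro m m' h1 h2 hv
      have hm1 := mem_tSupp_iff.mp h1
      have hm2 := mem_tSupp_iff.mp h2
      have hmid : (m, m' - 2 * k) ∈ tSupp l l' := by
        rw [mem_tSupp_iff]
        simp only at hm1 hm2 ⊢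
        omega
      have hstep := move_dn1 hq0 hq1 hqm1 hroot hs hT W hWf1 hmid
        (by rw [show m' - 2 * k - 2 = m' - 2 * (k + 1 : ℕ) by push_cast; ring]; exact h2) (IH m m' h1 hmid hv)
      rw [show (m' - 2 * (k + 1 : ℕ) : ℤ) = m' - 2 * k - 2 by push_cast; ring]
      exact hstep

include hWe0 hWf0 hWe1 hWf1 in
lemma move_all {m m' n n' : ℤ} (h1 : (m, m') ∈ tSupp l l') (h2 : (n, n') ∈ tSupp l l')
    (hv : tvec l l' (m, m') ∈ W) : tvec l l' (n, n') ∈ W := by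
  have hm1 := mem_tSupp_iff.mp h1
  have hm2 := mem_tSupp_iff.mp h2
  simp only at hm1 hm2
  have hmidmem : (n, m') ∈ tSupp l l' := by
    rw [mem_tSupp_iff]; simp only; omega
  have hstep1 : tvec l l' (n, m') ∈ W := by
    rcases le_total m n with hle | hle
    · obtain ⟨k, hk⟩ : ∃ k : ℕ, n = m + 2 * k := ⟨((n - m) / 2).toNat, by omega⟩
      rw [hk]
      exact move_up0_iter hq0 hq1 hqm1 hroot hs hT W hWe0 k m m' h1 (hk ▸ hmidmem) hv
    · obtain ⟨k, hk⟩ : ∃ k : ℕ, n = m - 2 * k := ⟨((m - n) / 2).toNat, by omega⟩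
      rw [hk]
      exact move_dn0_iter hq0 hq1 hqm1 hroot hs hT W hWf0 k m m' h1 (hk ▸ hmidmem) hv
  rcases le_total m' n' with hle | hle
  · obtain ⟨k, hk⟩ : ∃ k : ℕ, n' = m' + 2 * k := ⟨((n' - m') / 2).toNat, by omega⟩
    rw [hk]
    exact move_up1_iter hq0 hq1 hqm1 hroot hs hT W hWe1 k n m' hmidmem (hk ▸ h2) hstep1
  · obtain ⟨k, hk⟩ : ∃ k : ℕ, n' = m' - 2 * k := ⟨((m' - n') / 2).toNat, by omega⟩
    rw [hk]
    exact move_dn1_iter hq0 hq1 hqm1 hroot hs hT W hWf1 k n m' hmidmem (hk ▸ h2) hstep1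

end Move

end Stmt2Aux






/-- Theorem 1: for `q` not a root of unity, `l, l' ≥ 0` and
`ε, ε' ∈ {1, −1, i, −i}` with either `ε, ε' ∈ {1,−1}`, or `ε, ε' ∈ {i,−i}`, or
`l + l' ∉ ℤ` (doubled sum odd), the operators representing
`q^j K1K2 + q^{−j}K1⁻¹K2⁻¹` and `q^j K1K2⁻¹ + q^{−j}K1⁻¹K2` under
`T_l^{(ε)} ⊗ T_{l'}^{(ε')}` are invertible; the representation extends uniquely to a
representation of `Û_q(sl_2)^{⊗2,ext}` sending `u_j`, `v_j` to the corresponding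
inverse operators, and every such extension is irreducible. -/
theorem stmt_2 (q s : ℂ) (hq0 : q ≠ 0) (hq1 : q ≠ 1) (hqm1 : q ≠ -1)
    (hroot : ∀ n : ℕ, 1 ≤ n → q ^ n ≠ 1) (hs : s ^ 2 = q)
    (l l' : ℤ) (hl : 0 ≤ l) (hl' : 0 ≤ l')
    (ε ε' : ℂ)
    (hε : ε ∈ ({1, -1, Complex.I, -Complex.I} : Set ℂ))
    (hε' : ε' ∈ ({1, -1, Complex.I, -Complex.I} : Set ℂ))
    (hcase : (ε ∈ ({1, -1} : Set ℂ) ∧ ε' ∈ ({1, -1} : Set ℂ)) ∨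
             (ε ∈ ({Complex.I, -Complex.I} : Set ℂ) ∧ ε' ∈ ({Complex.I, -Complex.I} : Set ℂ)) ∨
             ¬ Even (l + l'))
    (T : Uhat2 q →ₐ[ℂ] Module.End ℂ (↥(tSupp l l') → ℂ))
    (hT : IsTensorRep q s l l' ε ε' T) :
    (∀ j : ℤ, IsUnit (T (P2 q j)) ∧ IsUnit (T (Q2 q j))) ∧
    (∃! Text : UhatExt q →ₐ[ℂ] Module.End ℂ (↥(tSupp l l') → ℂ),
        (∀ a : QG, Text (genE q (QGE.base a)) = T (gen2 q a)) ∧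
        (∀ j : ℤ, Text (uE q j) * T (P2 q j) = 1 ∧ T (P2 q j) * Text (uE q j) = 1 ∧
                  Text (vE q j) * T (Q2 q j) = 1 ∧ T (Q2 q j) * Text (vE q j) = 1)) ∧
    (∀ Text : UhatExt q →ₐ[ℂ] Module.End ℂ (↥(tSupp l l') → ℂ),
        (∀ a : QG, Text (genE q (QGE.base a)) = T (gen2 q a)) →
        ∀ W : Submodule ℂ (↥(tSupp l l') → ℂ),
          (∀ a : UhatExt q, ∀ w ∈ W, Text a w ∈ W) → W = ⊥ ∨ W = ⊤) := by
  classical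
  have hPne : ∀ j : ℤ, ∀ p ∈ tSupp l l', Stmt2Aux.kapP q s ε ε' j p ≠ 0 :=
    fun j p hp => Stmt2Aux.kapP_ne_zero hq0 hq1 hqm1 hroot hs hε hε' hcase j hp
  have hQne : ∀ j : ℤ, ∀ p ∈ tSupp l l', Stmt2Aux.kapQ q s ε ε' j p ≠ 0 :=
    fun j p hp => Stmt2Aux.kapQ_ne_zero hq0 hq1 hqm1 hroot hs hε hε' hcase j hp
  have hTP : ∀ j : ℤ, T (P2 q j) = Stmt2Aux.diag l l' (Stmt2Aux.kapP q s ε ε' j) :=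
    fun j => Stmt2Aux.TP2_eq hT j
  have hTQ : ∀ j : ℤ, T (Q2 q j) = Stmt2Aux.diag l l' (Stmt2Aux.kapQ q s ε ε' j) :=
    fun j => Stmt2Aux.TQ2_eq hT j
  set F := Stmt2Aux.Fq q s ε ε' l l' T with hF
  have hrel : ∀ ⦃x y : FreeAlgebra ℂ QGE⦄, ExtRel q x y → F x = F y :=
    fun x y h => Stmt2Aux.Fq_rel hq0 hq1 hqm1 hroot hs hε hε' hcase hT h
  set Text0 : UhatExt q →ₐ[ℂ] Module.End ℂ (↥(tSupp l l') → ℂ) :=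
    RingQuot.liftAlgHom ℂ ⟨F, hrel⟩ with hText0
  have hgen : ∀ x : QGE, Text0 (genE q x) = F (FreeAlgebra.ι ℂ x) := by
    intro x
    rw [genE, hText0]
    exact RingQuot.liftAlgHom_mkAlgHom_apply (f := F) (w := hrel) _ _
  have hcond1 : ∀ a : QG, Text0 (genE q (QGE.base a)) = T (gen2 q a) := by
    intro a
    rw [hgen]
    exact Stmt2Aux.Fq_base a
  have hcondu : ∀ j : ℤ, Text0 (uE q j)
      = Stmt2Aux.diag l l' (fun p => (Stmt2Aux.kapP q s ε ε' j p)⁻¹) := by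
    intro j
    rw [uE, hgen]
    exact Stmt2Aux.Fq_u j
  have hcondv : ∀ j : ℤ, Text0 (vE q j)
      = Stmt2Aux.diag l l' (fun p => (Stmt2Aux.kapQ q s ε ε' j p)⁻¹) := by
    intro j
    rw [vE, hgen]
    exact Stmt2Aux.Fq_v j
  have hcond2 : ∀ j : ℤ, Text0 (uE q j) * T (P2 q j) = 1 ∧ T (P2 q j) * Text0 (uE q j) = 1 ∧
      Text0 (vE q j) * T (Q2 q j) = 1 ∧ T (Q2 q j) * Text0 (vE q j) = 1 := by
    intro j
    rw [hcondu j, hcondv j, hTP j, hTQ j]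
    exact ⟨Stmt2Aux.diag_inv_mul (hPne j), Stmt2Aux.diag_mul_inv (hPne j),
      Stmt2Aux.diag_inv_mul (hQne j), Stmt2Aux.diag_mul_inv (hQne j)⟩
  refine ⟨?_, ?_, ?_⟩
  · intro j
    constructor
    · exact ⟨⟨T (P2 q j), Stmt2Aux.diag l l' (fun p => (Stmt2Aux.kapP q s ε ε' j p)⁻¹),
        by rw [hTP j]; exact Stmt2Aux.diag_mul_inv (hPne j),
        by rw [hTP j]; exact Stmt2Aux.diag_inv_mul (hPne j)⟩, rfl⟩
    · exact ⟨⟨T (Q2 q j), Stmt2Aux.diag l l' (fun p => (Stmt2Aux.kapQ q s ε ε' j p)⁻¹),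
        by rw [hTQ j]; exact Stmt2Aux.diag_mul_inv (hQne j),
        by rw [hTQ j]; exact Stmt2Aux.diag_inv_mul (hQne j)⟩, rfl⟩
  · refine ⟨Text0, ⟨hcond1, hcond2⟩, ?_⟩
    intro y hy
    obtain ⟨hy1, hy2⟩ := hy
    have huu : ∀ j : ℤ, y (uE q j) = Text0 (uE q j) := by
      intro j
      calc y (uE q j) = y (uE q j) * (T (P2 q j) * Text0 (uE q j)) := by
            rw [(hcond2 j).2.1, mul_one]
        _ = (y (uE q j) * T (P2 q j)) * Text0 (uE q j) := by rw [mul_assoc]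
        _ = Text0 (uE q j) := by rw [(hy2 j).1, one_mul]
    have hvv : ∀ j : ℤ, y (vE q j) = Text0 (vE q j) := by
      intro j
      calc y (vE q j) = y (vE q j) * (T (Q2 q j) * Text0 (vE q j)) := by
            rw [(hcond2 j).2.2.2, mul_one]
        _ = (y (vE q j) * T (Q2 q j)) * Text0 (vE q j) := by rw [mul_assoc]
        _ = Text0 (vE q j) := by rw [(hy2 j).2.2.1, one_mul]
    have hcomp : y.comp (RingQuot.mkAlgHom ℂ (ExtRel q))
        = Text0.comp (RingQuot.mkAlgHom ℂ (ExtRel q)) := by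
      apply FreeAlgebra.hom_ext
      funext x
      simp only [Function.comp_apply, AlgHom.comp_apply]
      cases x with
      | base a =>
          have e1 : RingQuot.mkAlgHom ℂ (ExtRel q) (FreeAlgebra.ι ℂ (QGE.base a))
              = genE q (QGE.base a) := rfl
          rw [e1, hy1 a, ← hcond1 a]
      | u j =>
          have e1 : RingQuot.mkAlgHom ℂ (ExtRel q) (FreeAlgebra.ι ℂ (QGE.u j))
              = uE q j := rfl
          rw [e1]; exact huu j
      | v j =>
          have e1 : RingQuot.mkAlgHom ℂ (ExtRel q) (FreeAlgebra.ι ℂ (QGE.v j))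
              = vE q j := rfl
          rw [e1]; exact hvv j
    apply AlgHom.ext
    intro z
    obtain ⟨w, rfl⟩ := RingQuot.mkAlgHom_surjective ℂ (ExtRel q) z
    exact DFunLike.congr_fun hcomp w
  · intro Te hbase W hW
    by_cases hbot : W = ⊥
    · exact Or.inl hbot
    right
    have hε0 : ε ≠ 0 := Stmt2Aux.eps_ne_zero hε
    have hε'0 : ε' ≠ 0 := Stmt2Aux.eps_ne_zero hε'
    obtain ⟨w, hwW, hw0⟩ := (Submodule.ne_bot_iff W).mp hbot
    obtain ⟨b, hb⟩ : ∃ b, w b ≠ 0 := by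
      by_contra h
      push_neg at h
      exact hw0 (funext h)
    have hWa : ∀ a : QG, ∀ v ∈ W, T (gen2 q a) v ∈ W := by
      intro a v hv
      rw [← hbase a]
      exact hW _ v hv
    have hWK0 : ∀ v ∈ W, Stmt2Aux.diag l l' (Stmt2Aux.kap1 s ε) v ∈ W := by
      intro v hv
      rw [← Stmt2Aux.TK0_eq hT]
      exact hWa (QG.K 0) v hv
    have hWK1 : ∀ v ∈ W, Stmt2Aux.diag l l' (Stmt2Aux.kap2 s ε') v ∈ W := by
      intro v hv
      rw [← Stmt2Aux.TK1_eq hT]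
      exact hWa (QG.K 1) v hv
    have htb : tvec l l' ↑b ∈ W :=
      Stmt2Aux.stepA hq0 hroot hs hε0 hε'0 W hWK0 hWK1 _ w hwW b hb le_rfl
    apply Stmt2Aux.top_of_all_tvec W
    intro c
    have hbmem : ((↑b : ℤ × ℤ).1, (↑b : ℤ × ℤ).2) ∈ tSupp l l' := by
      rw [Prod.mk.eta]; exact b.2
    have hcmem : ((↑c : ℤ × ℤ).1, (↑c : ℤ × ℤ).2) ∈ tSupp l l' := by
      rw [Prod.mk.eta]; exact c.2
    have htb' : tvec l l' ((↑b : ℤ × ℤ).1, (↑b : ℤ × ℤ).2) ∈ W := by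
      rw [Prod.mk.eta]; exact htb
    have hfin := Stmt2Aux.move_all hq0 hq1 hqm1 hroot hs hT W
      (fun v hv => hWa (QG.e 0) v hv) (fun v hv => hWa (QG.f 0) v hv)
      (fun v hv => hWa (QG.e 1) v hv) (fun v hv => hWa (QG.f 1) v hv)
      hbmem hcmem htb'
    rwa [Prod.mk.eta] at hfin
end
end

section
/- If q is not a root of unity, then for all admissible j, j' (one half-integral, one integral) and all ε1, ε2, ε3 ∈ {+1, −1}, the nonclassical-type representation R^{(ε1,ε2,ε3)}_{jj'} of U'_q(so_4) is irreducible: its representation space has no invariant subspaces other than 0 and the whole space. -/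
noncomputable section

open Classical

/-- Generators of `U'_q(so_4)`. -/
inductive SO4Gen : Type
  | g21 | g32 | g43

open FreeAlgebra in
/-- Defining relations of `U'_q(so_4)`. -/
inductive SO4Rel (q : ℂ) : FreeAlgebra ℂ SO4Gen → FreeAlgebra ℂ SO4Gen → Prop
  | r1 : SO4Rel q
      (ι ℂ SO4Gen.g21 * (ι ℂ SO4Gen.g32)^2 - (q + q⁻¹) • (ι ℂ SO4Gen.g32 * ι ℂ SO4Gen.g21 * ι ℂ SO4Gen.g32)
        + (ι ℂ SO4Gen.g32)^2 * ι ℂ SO4Gen.g21) (-(ι ℂ SO4Gen.g21))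
  | r2 : SO4Rel q
      (ι ℂ SO4Gen.g32 * (ι ℂ SO4Gen.g21)^2 - (q + q⁻¹) • (ι ℂ SO4Gen.g21 * ι ℂ SO4Gen.g32 * ι ℂ SO4Gen.g21)
        + (ι ℂ SO4Gen.g21)^2 * ι ℂ SO4Gen.g32) (-(ι ℂ SO4Gen.g32))
  | r3 : SO4Rel q
      (ι ℂ SO4Gen.g32 * (ι ℂ SO4Gen.g43)^2 - (q + q⁻¹) • (ι ℂ SO4Gen.g43 * ι ℂ SO4Gen.g32 * ι ℂ SO4Gen.g43)
        + (ι ℂ SO4Gen.g43)^2 * ι ℂ SO4Gen.g32) (-(ι ℂ SO4Gen.g32))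
  | r4 : SO4Rel q
      (ι ℂ SO4Gen.g43 * (ι ℂ SO4Gen.g32)^2 - (q + q⁻¹) • (ι ℂ SO4Gen.g32 * ι ℂ SO4Gen.g43 * ι ℂ SO4Gen.g32)
        + (ι ℂ SO4Gen.g32)^2 * ι ℂ SO4Gen.g43) (-(ι ℂ SO4Gen.g43))
  | r5 : SO4Rel q (ι ℂ SO4Gen.g21 * ι ℂ SO4Gen.g43) (ι ℂ SO4Gen.g43 * ι ℂ SO4Gen.g21)

/-- The algebra `U'_q(so_4)`. -/
abbrev UqSO4 (q : ℂ) : Type := RingQuot (SO4Rel q)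

/-- The generator `I_21` of `U'_q(so_4)`. -/
def J21 (q : ℂ) : UqSO4 q := RingQuot.mkAlgHom ℂ (SO4Rel q) (FreeAlgebra.ι ℂ SO4Gen.g21)
/-- The generator `I_32` of `U'_q(so_4)`. -/
def J32 (q : ℂ) : UqSO4 q := RingQuot.mkAlgHom ℂ (SO4Rel q) (FreeAlgebra.ι ℂ SO4Gen.g32)
/-- The generator `I_43` of `U'_q(so_4)`. -/
def J43 (q : ℂ) : UqSO4 q := RingQuot.mkAlgHom ℂ (SO4Rel q) (FreeAlgebra.ι ℂ SO4Gen.g43)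

/-- q-commutator `[a,b]_q = q^{1/2} a b - q^{-1/2} b a`, where `s = q^{1/2}`. -/
def qbr {A : Type} [Ring A] [Algebra ℂ A] (s : ℂ) (a b : A) : A := s • (a * b) - s⁻¹ • (b * a)

/-- q-commutator `[a,b]_{q⁻¹} = q^{-1/2} a b - q^{1/2} b a`, where `s = q^{1/2}`. -/
def qbrInv {A : Type} [Ring A] [Algebra ℂ A] (s : ℂ) (a b : A) : A := s⁻¹ • (a * b) - s • (b * a)

def J31 (q s : ℂ) : UqSO4 q := qbr s (J21 q) (J32 q)
def J42 (q s : ℂ) : UqSO4 q := qbr s (J32 q) (J43 q)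
def J41 (q s : ℂ) : UqSO4 q := qbr s (J31 q s) (J43 q)
def J31m (q s : ℂ) : UqSO4 q := qbrInv s (J21 q) (J32 q)
def J42m (q s : ℂ) : UqSO4 q := qbrInv s (J32 q) (J43 q)
def J41m (q s : ℂ) : UqSO4 q := qbrInv s (J31 q s) (J43 q)

/-- The Casimir element `C_4`. -/
def C4 (q s : ℂ) : UqSO4 q :=
  q⁻¹ • (J21 q * J43 q) - J31 q s * J42 q s + q • (J32 q * J41 q s)

/-- The Casimir element `C'_4`. -/
def C4' (q s : ℂ) : UqSO4 q :=
  (q⁻¹)^2 • (J21 q)^2 + (J32 q)^2 + q^2 • (J43 q)^2 + q⁻¹ • (J31 q s * J31m q s)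
    + q • (J42 q s * J42m q s) + J41 q s * J41m q s

/-- The "plus" q-number `[a]_+` for the half-integer `a/2` (doubled argument). -/
def qNumP (q s : ℂ) (a : ℤ) : ℂ := (s ^ a + s ^ (-a)) / (q - q⁻¹)

/-- Basis "delta" vector of the function space on a finite index set `S ⊆ ℤ × ℤ`;
for `p ∉ S` this is the zero vector (out-of-range basis vectors are `0`). -/
def bvec (S : Finset (ℤ × ℤ)) (p : ℤ × ℤ) : (↥S → ℂ) :=
  fun b => if (b : ℤ × ℤ) = p then 1 else 0

/-- Index set `{(k,l) : |k| ≤ j, k ≡ j, |l| ≤ j', l ≡ j'}` for the classical-type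
representation `R_{jj'}` (all indices are doubled half-integers). -/
def clSupp (j j' : ℤ) : Finset (ℤ × ℤ) :=
  ((Finset.Icc (-j) j) ×ˢ (Finset.Icc (-j') j')).filter
    (fun p => (j - p.1) % 2 = 0 ∧ (j' - p.2) % 2 = 0)

/-- Index set for the nonclassical-type representations (doubled half-integers):
`k ∈ {1/2, …, j}`, `l ∈ {−j', …, j'}` if `j` is half-integral, and
`k ∈ {−j, …, j}`, `l ∈ {1/2, …, j'}` if `j'` is half-integral. -/
def nclSupp (j j' : ℤ) : Finset (ℤ × ℤ) :=
  if j % 2 = 1 then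
    ((Finset.Icc 1 j) ×ˢ (Finset.Icc (-j') j')).filter
      (fun p => p.1 % 2 = 1 ∧ p.2 % 2 = 0)
  else
    ((Finset.Icc (-j) j) ×ˢ (Finset.Icc 1 j')).filter
      (fun p => p.1 % 2 = 0 ∧ p.2 % 2 = 1)

/-- Admissibility of the parameters `(j, j')` for the nonclassical-type representations:
one of them is half-integral and the other is integral (doubled convention: one is odd and
one is even), `j ≥ 0`, `j' ≥ 0`. -/
def Adm (j j' : ℤ) : Prop :=
  (j % 2 = 1 ∧ j' % 2 = 0 ∧ 1 ≤ j ∧ 0 ≤ j') ∨ (j % 2 = 0 ∧ j' % 2 = 1 ∧ 0 ≤ j ∧ 1 ≤ j')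

/-- The formulas (31)–(33) for the classical-type representation `R_{jj'}` of
`U'_q(so_4)` (all indices doubled: `|k,l⟩` is `bvec (clSupp j j') (k, l)`). -/
def IsClRep (q s : ℂ) (j j' : ℤ)
    (R : UqSO4 q →ₐ[ℂ] Module.End ℂ (↥(clSupp j j') → ℂ)) : Prop :=
  ∀ k l : ℤ, (k, l) ∈ clSupp j j' →
    R (J21 q) (bvec (clSupp j j') (k, l)) =
      (Complex.I * qNum q s (k + l)) • bvec (clSupp j j') (k, l) ∧
    R (J43 q) (bvec (clSupp j j') (k, l)) =
      (Complex.I * qNum q s (k - l)) • bvec (clSupp j j') (k, l) ∧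
    R (J32 q) (bvec (clSupp j j') (k, l)) =
      ((s ^ (k + l) + s ^ (-(k + l))) * (s ^ (k - l) + s ^ (-(k - l))))⁻¹ •
        ( (-((s ^ (j - l) + s ^ (-(j - l))) * qNum q s (j' - l))) • bvec (clSupp j j') (k, l + 2)
        + ((s ^ (j + l) + s ^ (-(j + l))) * qNum q s (j' + l)) • bvec (clSupp j j') (k, l - 2)
        + ((s ^ (j' - k) + s ^ (-(j' - k))) * qNum q s (j - k)) • bvec (clSupp j j') (k + 2, l)
        - ((s ^ (j' + k) + s ^ (-(j' + k))) * qNum q s (j + k)) • bvec (clSupp j j') (k - 2, l))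

/-- The formulas (50)–(54) for the nonclassical-type representation
`R^{(ε1,ε2,ε3)}_{jj'}` of `U'_q(so_4)` (all indices doubled: `|k,l⟩` is
`bvec (nclSupp j j') (k, l)`; `(−1)^l` is `(−1)^(l/2)` for the doubled `l`). -/
def IsNclRep (q s ε1 ε2 ε3 : ℂ) (j j' : ℤ)
    (R : UqSO4 q →ₐ[ℂ] Module.End ℂ (↥(nclSupp j j') → ℂ)) : Prop :=
  (∀ k l : ℤ, (k, l) ∈ nclSupp j j' →
      R (J21 q) (bvec (nclSupp j j') (k, l)) =
        (ε1 * qNumP q s (k + l)) • bvec (nclSupp j j') (k, l) ∧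
      R (J43 q) (bvec (nclSupp j j') (k, l)) =
        (ε2 * qNumP q s (k - l)) • bvec (nclSupp j j') (k, l)) ∧
  (∀ k l : ℤ, (k, l) ∈ nclSupp j j' → k ≠ 1 → l ≠ 1 →
      R (J32 q) (bvec (nclSupp j j') (k, l)) =
        (qNum q s (k + l) * qNum q s (k - l) * (q - q⁻¹))⁻¹ •
          ( (-(Complex.I * (qNum q s (j' - l) * qNum q s (j - l)))) • bvec (nclSupp j j') (k, l + 2)
          + (Complex.I * (qNum q s (j' + l) * qNum q s (j + l))) • bvec (nclSupp j j') (k, l - 2)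
          + (-(Complex.I * (qNum q s (j' - k) * qNum q s (j - k)))) • bvec (nclSupp j j') (k + 2, l)
          + (Complex.I * (qNum q s (j' + k) * qNum q s (j + k))) • bvec (nclSupp j j') (k - 2, l))) ∧
  (j % 2 = 1 → ∀ l : ℤ, (1, l) ∈ nclSupp j j' →
      R (J32 q) (bvec (nclSupp j j') (1, l)) =
        (qNum q s (l + 1) * qNum q s (l - 1) * (q - q⁻¹))⁻¹ •
          ( (-(Complex.I * (qNum q s (j - l) * qNum q s (j' - l)))) • bvec (nclSupp j j') (1, l + 2)
          + (Complex.I * (qNum q s (j + l) * qNum q s (j' + l))) • bvec (nclSupp j j') (1, l - 2)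
          + (-(Complex.I * (qNum q s (j' - 1) * qNum q s (j - 1)))) • bvec (nclSupp j j') (3, l)
          + (Complex.I * (qNum q s (j' + 1) * qNum q s (j + 1)) * ε3 * (-1 : ℂ) ^ (l / 2)) •
              bvec (nclSupp j j') (1, -l))) ∧
  (j' % 2 = 1 → ∀ k : ℤ, (k, 1) ∈ nclSupp j j' →
      R (J32 q) (bvec (nclSupp j j') (k, 1)) =
        (qNum q s (k + 1) * qNum q s (k - 1) * (q - q⁻¹))⁻¹ •
          ( (-(Complex.I * (qNum q s (j - 1) * qNum q s (j' - 1)))) • bvec (nclSupp j j') (k, 3)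
          + (Complex.I * (qNum q s (j + 1) * qNum q s (j' + 1)) * ε3 * (-1 : ℂ) ^ (k / 2)) •
              bvec (nclSupp j j') (-k, 1)
          + (-(Complex.I * (qNum q s (j' - k) * qNum q s (j - k)))) • bvec (nclSupp j j') (k + 2, 1)
          + (Complex.I * (qNum q s (j' + k) * qNum q s (j + k))) • bvec (nclSupp j j') (k - 2, 1)))

/-! ### Auxiliary lemmas -/

lemma s_ne_zero {q s : ℂ} (hq0 : q ≠ 0) (hs : s ^ 2 = q) : s ≠ 0 := by
  intro h; apply hq0; rw [← hs, h]; ring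

lemma qq_ne_zero {q : ℂ} (hq0 : q ≠ 0) (hq1 : q ≠ 1) (hqm1 : q ≠ -1) : q - q⁻¹ ≠ 0 := by
  intro h
  have h2 : q * q - 1 = 0 := by
    have := sub_eq_zero.mp h
    rw [inv_eq_one_div] at this
    field_simp at this
    linear_combination this
  have : (q - 1) * (q + 1) = 0 := by linear_combination h2
  rcases mul_eq_zero.mp this with h | h
  · exact hq1 (sub_eq_zero.mp h)
  · exact hqm1 (by linear_combination h)

lemma spow_eq_one {q s : ℂ} (hq0 : q ≠ 0)
    (hroot : ∀ n : ℕ, 1 ≤ n → q ^ n ≠ 1) (hs : s ^ 2 = q)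
    (m : ℤ) (hm : s ^ m = 1) : m = 0 := by
  have hqm : q ^ m = 1 := by
    rw [← hs, ← zpow_natCast s 2, ← zpow_mul, mul_comm, zpow_mul, hm, one_zpow]
  by_contra hne
  rcases lt_or_gt_of_ne hne with h | h
  · have : q ^ (-m).toNat = 1 := by
      rw [← zpow_natCast, Int.toNat_of_nonneg (by omega), zpow_neg, hqm, inv_one]
    exact hroot (-m).toNat (by omega) this
  · have : q ^ m.toNat = 1 := by
      rw [← zpow_natCast, Int.toNat_of_nonneg (by omega)]; exact hqm
    exact hroot m.toNat (by omega) this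

lemma qNum_ne_zero {q s : ℂ} (hq0 : q ≠ 0) (hq1 : q ≠ 1) (hqm1 : q ≠ -1)
    (hroot : ∀ n : ℕ, 1 ≤ n → q ^ n ≠ 1) (hs : s ^ 2 = q)
    {a : ℤ} (ha : a ≠ 0) : qNum q s a ≠ 0 := by
  have hs0 : s ≠ 0 := s_ne_zero hq0 hs
  unfold qNum
  apply div_ne_zero _ (qq_ne_zero hq0 hq1 hqm1)
  intro h
  have h1 : s ^ a = s ^ (-a) := sub_eq_zero.mp h
  have h2 : s ^ (2 * a) = 1 := by
    rw [two_mul, zpow_add₀ hs0]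
    nth_rewrite 2 [h1]
    rw [← zpow_add₀ hs0]; simp
  exact ha (by have := spow_eq_one hq0 hroot hs _ h2; omega)

lemma qNumP_inj {q s : ℂ} (hq0 : q ≠ 0) (hq1 : q ≠ 1) (hqm1 : q ≠ -1)
    (hroot : ∀ n : ℕ, 1 ≤ n → q ^ n ≠ 1) (hs : s ^ 2 = q)
    {a b : ℤ} (h : qNumP q s a = qNumP q s b) : a = b ∨ a = -b := by
  have hs0 : s ≠ 0 := s_ne_zero hq0 hs
  have h1 : s ^ a + s ^ (-a) = s ^ b + s ^ (-b) := by
    have hqq := qq_ne_zero (q := q) hq0 hq1 hqm1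
    unfold qNumP at h
    rw [div_eq_div_iff hqq hqq] at h
    exact mul_right_cancel₀ hqq h
  have h2 : (s ^ a - s ^ b) * (1 - s ^ (-a - b)) = 0 := by
    have e1 : s ^ a * s ^ (-a-b) = s ^ (-b) := by rw [← zpow_add₀ hs0]; ring_nf
    have e2 : s ^ b * s ^ (-a-b) = s ^ (-a) := by rw [← zpow_add₀ hs0]; ring_nf
    linear_combination h1 - e1 + e2
  rcases mul_eq_zero.mp h2 with h | h
  · left
    have h3 : s ^ (a - b) = 1 := by
      rw [zpow_sub₀ hs0, sub_eq_zero.mp h, div_self (zpow_ne_zero _ hs0)]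
    have := spow_eq_one hq0 hroot hs _ h3; omega
  · right
    have h3 : s ^ (-a - b) = 1 := by linear_combination -h
    have := spow_eq_one hq0 hroot hs _ h3; omega

lemma coeff_nz {q s : ℂ} (hq0 : q ≠ 0) (hq1 : q ≠ 1) (hqm1 : q ≠ -1)
    (hroot : ∀ n : ℕ, 1 ≤ n → q ^ n ≠ 1) (hs : s ^ 2 = q)
    (u v a b : ℤ) (hu : u ≠ 0) (hv : v ≠ 0) (ha : a ≠ 0) (hb : b ≠ 0) :
    (qNum q s u * qNum q s v * (q - q⁻¹))⁻¹ * (Complex.I * (qNum q s a * qNum q s b)) ≠ 0 :=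
  mul_ne_zero (inv_ne_zero (mul_ne_zero (mul_ne_zero (qNum_ne_zero hq0 hq1 hqm1 hroot hs hu)
    (qNum_ne_zero hq0 hq1 hqm1 hroot hs hv)) (qq_ne_zero hq0 hq1 hqm1)))
    (mul_ne_zero Complex.I_ne_zero (mul_ne_zero (qNum_ne_zero hq0 hq1 hqm1 hroot hs ha)
      (qNum_ne_zero hq0 hq1 hqm1 hroot hs hb)))

lemma mem_ncl_odd {j j' : ℤ} (hj : j % 2 = 1) (k l : ℤ) :
    (k, l) ∈ nclSupp j j' ↔ 1 ≤ k ∧ k ≤ j ∧ -j' ≤ l ∧ l ≤ j' ∧ k % 2 = 1 ∧ l % 2 = 0 := by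
  unfold nclSupp
  rw [if_pos hj]
  simp only [Finset.mem_filter, Finset.mem_product, Finset.mem_Icc]
  tauto

lemma mem_ncl_even {j j' : ℤ} (hj : j % 2 = 0) (k l : ℤ) :
    (k, l) ∈ nclSupp j j' ↔ -j ≤ k ∧ k ≤ j ∧ 1 ≤ l ∧ l ≤ j' ∧ k % 2 = 0 ∧ l % 2 = 1 := by
  unfold nclSupp
  rw [if_neg (by omega)]
  simp only [Finset.mem_filter, Finset.mem_product, Finset.mem_Icc]
  tauto

lemma sum_bvec (S : Finset (ℤ × ℤ)) (x : ↥S → ℂ) :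
    ∑ b : ↥S, x b • bvec S ↑b = x := by
  funext b'
  simp only [Finset.sum_apply, Pi.smul_apply, bvec, smul_eq_mul, Subtype.coe_inj,
    mul_ite, mul_one, mul_zero]
  rw [Finset.sum_ite_eq Finset.univ b' x]
  simp

lemma diag_apply {S : Finset (ℤ × ℤ)} (A : Module.End ℂ (↥S → ℂ)) (c : ↥S → ℂ)
    (h : ∀ b : ↥S, A (bvec S ↑b) = c b • bvec S ↑b) (x : ↥S → ℂ) (b : ↥S) :
    A x b = c b * x b := by
  conv_lhs => rw [← sum_bvec S x]
  rw [map_sum]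
  simp_rw [map_smul, h]
  simp only [Finset.sum_apply, Pi.smul_apply, bvec, smul_eq_mul, Subtype.coe_inj,
    mul_ite, mul_one, mul_zero]
  rw [Finset.sum_ite_eq Finset.univ b (fun b' => x b' * c b')]
  simp [mul_comm]

lemma eval4 {S : Finset (ℤ × ℤ)} (c c1 c2 c3 c4 : ℂ) (t1 t2 t3 t4 p : ℤ × ℤ) (hp : p ∈ S) :
    (c • (c1 • bvec S t1 + c2 • bvec S t2 + c3 • bvec S t3 + c4 • bvec S t4)) ⟨p, hp⟩
      = c * ((if p = t1 then c1 else 0) + (if p = t2 then c2 else 0)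
          + (if p = t3 then c3 else 0) + (if p = t4 then c4 else 0)) := by
  simp only [Pi.smul_apply, Pi.add_apply, smul_eq_mul, bvec, mul_ite, mul_one, mul_zero]

lemma extract {S : Finset (ℤ × ℤ)} (W : Submodule ℂ (↥S → ℂ))
    (lam mu : ↥S → ℂ) (A B : Module.End ℂ (↥S → ℂ))
    (hA : ∀ b : ↥S, A (bvec S ↑b) = lam b • bvec S ↑b)
    (hB : ∀ b : ↥S, B (bvec S ↑b) = mu b • bvec S ↑b)
    (hWA : ∀ x ∈ W, A x ∈ W) (hWB : ∀ x ∈ W, B x ∈ W)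
    (hsep : ∀ b b' : ↥S, b ≠ b' → lam b ≠ lam b' ∨ mu b ≠ mu b') :
    ∀ (n : ℕ) (x : ↥S → ℂ), x ∈ W → ∀ (b : ↥S), x b ≠ 0 →
      (Finset.univ.filter (fun b' => x b' ≠ 0)).card ≤ n → bvec S ↑b ∈ W := by
  intro n
  induction n with
  | zero =>
    intro x hx b hb hcard
    exact absurd hcard (by
      simp only [not_le]
      refine Finset.card_pos.mpr ⟨b, ?_⟩
      simp [hb])
  | succ n ih =>
    intro x hx b hb hcard
    by_cases hone : ∀ b' : ↥S, x b' ≠ 0 → b' = b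
    · have hx' : x = x b • bvec S ↑b := by
        funext b'
        by_cases h : b' = b
        · subst h; simp [bvec]
        · have : x b' = 0 := by
            by_contra h0; exact h (hone b' h0)
          simp [bvec, this, Subtype.coe_inj, h]
      have : bvec S ↑b = (x b)⁻¹ • x := by
        calc bvec S ↑b = (x b)⁻¹ • (x b • bvec S ↑b) := by
              rw [smul_smul, inv_mul_cancel₀ hb, one_smul]
          _ = (x b)⁻¹ • x := by rw [← hx']
      rw [this]
      exact W.smul_mem _ hx
    · push_neg at hone
      obtain ⟨b', hb', hbne⟩ := hone
      rcases hsep b' b hbne with hl | hl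
      · set y : ↥S → ℂ := A x - lam b' • x with hy
        have hyW : y ∈ W := W.sub_mem (hWA x hx) (W.smul_mem _ hx)
        have hyval : ∀ b'' : ↥S, y b'' = (lam b'' - lam b') * x b'' := by
          intro b''
          simp only [hy, Pi.sub_apply, Pi.smul_apply, smul_eq_mul,
            diag_apply A lam hA x b'']
          ring
        have hyb : y b ≠ 0 := by
          rw [hyval]
          exact mul_ne_zero (sub_ne_zero.mpr (Ne.symm hl)) hb
        refine ih y hyW b hyb ?_
        have hsub : (Finset.univ.filter (fun b'' => y b'' ≠ 0)) ⊆
            (Finset.univ.filter (fun b'' => x b'' ≠ 0)).erase b' := by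
          intro b'' hmem
          simp only [Finset.mem_filter, Finset.mem_univ, true_and] at hmem
          rw [Finset.mem_erase]
          constructor
          · intro h; subst h; apply hmem; rw [hyval]; ring
          · simp only [Finset.mem_filter, Finset.mem_univ, true_and]
            intro h0; apply hmem; rw [hyval, h0, mul_zero]
        calc (Finset.univ.filter (fun b'' => y b'' ≠ 0)).card
            ≤ ((Finset.univ.filter (fun b'' => x b'' ≠ 0)).erase b').card :=
              Finset.card_le_card hsub
          _ ≤ (Finset.univ.filter (fun b'' => x b'' ≠ 0)).card - 1 := by
              rw [Finset.card_erase_of_mem (by simp [hb'])]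
          _ ≤ n := by omega
      · set y : ↥S → ℂ := B x - mu b' • x with hy
        have hyW : y ∈ W := W.sub_mem (hWB x hx) (W.smul_mem _ hx)
        have hyval : ∀ b'' : ↥S, y b'' = (mu b'' - mu b') * x b'' := by
          intro b''
          simp only [hy, Pi.sub_apply, Pi.smul_apply, smul_eq_mul,
            diag_apply B mu hB x b'']
          ring
        have hyb : y b ≠ 0 := by
          rw [hyval]
          exact mul_ne_zero (sub_ne_zero.mpr (Ne.symm hl)) hb
        refine ih y hyW b hyb ?_
        have hsub : (Finset.univ.filter (fun b'' => y b'' ≠ 0)) ⊆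
            (Finset.univ.filter (fun b'' => x b'' ≠ 0)).erase b' := by
          intro b'' hmem
          simp only [Finset.mem_filter, Finset.mem_univ, true_and] at hmem
          rw [Finset.mem_erase]
          constructor
          · intro h; subst h; apply hmem; rw [hyval]; ring
          · simp only [Finset.mem_filter, Finset.mem_univ, true_and]
            intro h0; apply hmem; rw [hyval, h0, mul_zero]
        calc (Finset.univ.filter (fun b'' => y b'' ≠ 0)).card
            ≤ ((Finset.univ.filter (fun b'' => x b'' ≠ 0)).erase b').card :=
              Finset.card_le_card hsub
          _ ≤ (Finset.univ.filter (fun b'' => x b'' ≠ 0)).card - 1 := by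
              rw [Finset.card_erase_of_mem (by simp [hb'])]
          _ ≤ n := by omega

lemma extractW (q s : ℂ) (hq0 : q ≠ 0) (hq1 : q ≠ 1) (hqm1 : q ≠ -1)
    (hroot : ∀ n : ℕ, 1 ≤ n → q ^ n ≠ 1) (hs : s ^ 2 = q)
    (j j' : ℤ) (hadm : Adm j j') (ε1 ε2 ε3 : ℂ)
    (hε1 : ε1 = 1 ∨ ε1 = -1) (hε2 : ε2 = 1 ∨ ε2 = -1)
    (R : UqSO4 q →ₐ[ℂ] Module.End ℂ (↥(nclSupp j j') → ℂ))
    (hR : IsNclRep q s ε1 ε2 ε3 j j' R)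
    (W : Submodule ℂ (↥(nclSupp j j') → ℂ))
    (hW : ∀ a : UqSO4 q, ∀ x ∈ W, R a x ∈ W) :
    ∀ x ∈ W, ∀ (p : ℤ × ℤ) (hp : p ∈ nclSupp j j'), x ⟨p, hp⟩ ≠ 0 →
      bvec (nclSupp j j') p ∈ W := by
  intro x hx p hp hxp
  have hε1n : ε1 ≠ 0 := by rcases hε1 with h | h <;> rw [h] <;> norm_num
  have hε2n : ε2 ≠ 0 := by rcases hε2 with h | h <;> rw [h] <;> norm_num
  refine extract W
    (fun b => ε1 * qNumP q s ((b : ℤ × ℤ).1 + (b : ℤ × ℤ).2))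
    (fun b => ε2 * qNumP q s ((b : ℤ × ℤ).1 - (b : ℤ × ℤ).2))
    (R (J21 q)) (R (J43 q)) ?_ ?_
    (fun y hy => hW (J21 q) y hy) (fun y hy => hW (J43 q) y hy) ?_
    Finset.univ.card x hx ⟨p, hp⟩ hxp (Finset.card_filter_le _ _)
  · rintro ⟨⟨k, l⟩, hb⟩
    exact (hR.1 k l hb).1
  · rintro ⟨⟨k, l⟩, hb⟩
    exact (hR.1 k l hb).2
  · rintro ⟨⟨k, l⟩, hb⟩ ⟨⟨k', l'⟩, hb'⟩ hne
    by_contra hcon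
    push_neg at hcon
    obtain ⟨h1, h2⟩ := hcon
    have e1 := qNumP_inj hq0 hq1 hqm1 hroot hs (mul_left_cancel₀ hε1n h1)
    have e2 := qNumP_inj hq0 hq1 hqm1 hroot hs (mul_left_cancel₀ hε2n h2)
    have hne' : ¬ (k = k' ∧ l = l') := by
      rintro ⟨rfl, rfl⟩; exact hne rfl
    have e1' : k + l = k' + l' ∨ k + l = -(k' + l') := e1
    have e2' : k - l = k' - l' ∨ k - l = -(k' - l') := e2
    rcases hadm with ⟨hj, hj', _, _⟩ | ⟨hj, hj', _, _⟩
    · obtain ⟨c1, c2, c3, c4, c5, c6⟩ := (mem_ncl_odd hj k l).mp hb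
      obtain ⟨d1, d2, d3, d4, d5, d6⟩ := (mem_ncl_odd hj k' l').mp hb'
      rcases e1' with e1' | e1' <;> rcases e2' with e2' | e2' <;> omega
    · obtain ⟨c1, c2, c3, c4, c5, c6⟩ := (mem_ncl_even hj k l).mp hb
      obtain ⟨d1, d2, d3, d4, d5, d6⟩ := (mem_ncl_even hj k' l').mp hb'
      rcases e1' with e1' | e1' <;> rcases e2' with e2' | e2' <;> omega

lemma step (q s : ℂ) (hq0 : q ≠ 0) (hq1 : q ≠ 1) (hqm1 : q ≠ -1)
    (hroot : ∀ n : ℕ, 1 ≤ n → q ^ n ≠ 1) (hs : s ^ 2 = q)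
    (j j' : ℤ) (hadm : Adm j j') (ε1 ε2 ε3 : ℂ)
    (hε1 : ε1 = 1 ∨ ε1 = -1) (hε2 : ε2 = 1 ∨ ε2 = -1)
    (R : UqSO4 q →ₐ[ℂ] Module.End ℂ (↥(nclSupp j j') → ℂ))
    (hR : IsNclRep q s ε1 ε2 ε3 j j' R)
    (W : Submodule ℂ (↥(nclSupp j j') → ℂ))
    (hW : ∀ a : UqSO4 q, ∀ x ∈ W, R a x ∈ W)
    (k l k' l' : ℤ) (hp : (k, l) ∈ nclSupp j j') (hp' : (k', l') ∈ nclSupp j j')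
    (hadj : (k' = k ∧ (l' = l + 2 ∨ l' = l - 2)) ∨ (l' = l ∧ (k' = k + 2 ∨ k' = k - 2)))
    (hw : bvec (nclSupp j j') (k, l) ∈ W) : bvec (nclSupp j j') (k', l') ∈ W := by
  have hEx := extractW q s hq0 hq1 hqm1 hroot hs j j' hadm ε1 ε2 ε3 hε1 hε2 R hR W hW
  have hyW : R (J32 q) (bvec (nclSupp j j') (k, l)) ∈ W := hW _ _ hw
  have CNZ := coeff_nz hq0 hq1 hqm1 hroot hs
  rcases hadm with ⟨hj, hj', hjj, hjj'⟩ | ⟨hj, hj', hjj, hjj'⟩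
  · obtain ⟨hk1, hkj, hl1, hlj, hk2, hl2⟩ := (mem_ncl_odd hj k l).mp hp
    obtain ⟨hk1', hkj', hl1', hlj', hk2', hl2'⟩ := (mem_ncl_odd hj k' l').mp hp'
    by_cases hk : k = 1
    · subst hk
      have heq := hR.2.2.1 hj l hp
      refine hEx _ hyW (k', l') hp' ?_
      rw [heq, eval4]
      rcases hadj with ⟨e1, e2 | e2⟩ | ⟨e1, e2 | e2⟩
      · rw [if_pos (by simp only [Prod.mk.injEq]; omega),
            if_neg (by simp only [Prod.mk.injEq]; omega),
            if_neg (by simp only [Prod.mk.injEq]; omega),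
            if_neg (by simp only [Prod.mk.injEq]; omega)]
        simp only [add_zero, zero_add]
        rw [mul_neg, neg_ne_zero]
        exact CNZ _ _ _ _ (by omega) (by omega) (by omega) (by omega)
      · rw [if_neg (by simp only [Prod.mk.injEq]; omega),
            if_pos (by simp only [Prod.mk.injEq]; omega),
            if_neg (by simp only [Prod.mk.injEq]; omega),
            if_neg (by simp only [Prod.mk.injEq]; omega)]
        simp only [add_zero, zero_add]
        exact CNZ _ _ _ _ (by omega) (by omega) (by omega) (by omega)
      · rw [if_neg (by simp only [Prod.mk.injEq]; omega),
            if_neg (by simp only [Prod.mk.injEq]; omega),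
            if_pos (by simp only [Prod.mk.injEq]; omega),
            if_neg (by simp only [Prod.mk.injEq]; omega)]
        simp only [add_zero, zero_add]
        rw [mul_neg, neg_ne_zero]
        exact CNZ _ _ _ _ (by omega) (by omega) (by omega) (by omega)
      · exact absurd hk1' (by omega)
    · have heq := hR.2.1 k l hp hk (by omega)
      refine hEx _ hyW (k', l') hp' ?_
      rw [heq, eval4]
      rcases hadj with ⟨e1, e2 | e2⟩ | ⟨e1, e2 | e2⟩
      · rw [if_pos (by simp only [Prod.mk.injEq]; omega),
            if_neg (by simp only [Prod.mk.injEq]; omega),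
            if_neg (by simp only [Prod.mk.injEq]; omega),
            if_neg (by simp only [Prod.mk.injEq]; omega)]
        simp only [add_zero, zero_add]
        rw [mul_neg, neg_ne_zero]
        exact CNZ _ _ _ _ (by omega) (by omega) (by omega) (by omega)
      · rw [if_neg (by simp only [Prod.mk.injEq]; omega),
            if_pos (by simp only [Prod.mk.injEq]; omega),
            if_neg (by simp only [Prod.mk.injEq]; omega),
            if_neg (by simp only [Prod.mk.injEq]; omega)]
        simp only [add_zero, zero_add]
        exact CNZ _ _ _ _ (by omega) (by omega) (by omega) (by omega)
      · rw [if_neg (by simp only [Prod.mk.injEq]; omega),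
            if_neg (by simp only [Prod.mk.injEq]; omega),
            if_pos (by simp only [Prod.mk.injEq]; omega),
            if_neg (by simp only [Prod.mk.injEq]; omega)]
        simp only [add_zero, zero_add]
        rw [mul_neg, neg_ne_zero]
        exact CNZ _ _ _ _ (by omega) (by omega) (by omega) (by omega)
      · rw [if_neg (by simp only [Prod.mk.injEq]; omega),
            if_neg (by simp only [Prod.mk.injEq]; omega),
            if_neg (by simp only [Prod.mk.injEq]; omega),
            if_pos (by simp only [Prod.mk.injEq]; omega)]
        simp only [add_zero, zero_add]
        exact CNZ _ _ _ _ (by omega) (by omega) (by omega) (by omega)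
  · obtain ⟨hk1, hkj, hl1, hlj, hk2, hl2⟩ := (mem_ncl_even hj k l).mp hp
    obtain ⟨hk1', hkj', hl1', hlj', hk2', hl2'⟩ := (mem_ncl_even hj k' l').mp hp'
    by_cases hl : l = 1
    · subst hl
      have heq := hR.2.2.2 hj' k hp
      refine hEx _ hyW (k', l') hp' ?_
      rw [heq, eval4]
      rcases hadj with ⟨e1, e2 | e2⟩ | ⟨e1, e2 | e2⟩
      · rw [if_pos (by simp only [Prod.mk.injEq]; omega),
            if_neg (by simp only [Prod.mk.injEq]; omega),
            if_neg (by simp only [Prod.mk.injEq]; omega),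
            if_neg (by simp only [Prod.mk.injEq]; omega)]
        simp only [add_zero, zero_add]
        rw [mul_neg, neg_ne_zero]
        exact CNZ _ _ _ _ (by omega) (by omega) (by omega) (by omega)
      · exact absurd hl1' (by omega)
      · rw [if_neg (by simp only [Prod.mk.injEq]; omega),
            if_neg (by simp only [Prod.mk.injEq]; omega),
            if_pos (by simp only [Prod.mk.injEq]; omega),
            if_neg (by simp only [Prod.mk.injEq]; omega)]
        simp only [add_zero, zero_add]
        rw [mul_neg, neg_ne_zero]
        exact CNZ _ _ _ _ (by omega) (by omega) (by omega) (by omega)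
      · rw [if_neg (by simp only [Prod.mk.injEq]; omega),
            if_neg (by simp only [Prod.mk.injEq]; omega),
            if_neg (by simp only [Prod.mk.injEq]; omega),
            if_pos (by simp only [Prod.mk.injEq]; omega)]
        simp only [add_zero, zero_add]
        exact CNZ _ _ _ _ (by omega) (by omega) (by omega) (by omega)
    · have heq := hR.2.1 k l hp (by omega) hl
      refine hEx _ hyW (k', l') hp' ?_
      rw [heq, eval4]
      rcases hadj with ⟨e1, e2 | e2⟩ | ⟨e1, e2 | e2⟩
      · rw [if_pos (by simp only [Prod.mk.injEq]; omega),
            if_neg (by simp only [Prod.mk.injEq]; omega),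
            if_neg (by simp only [Prod.mk.injEq]; omega),
            if_neg (by simp only [Prod.mk.injEq]; omega)]
        simp only [add_zero, zero_add]
        rw [mul_neg, neg_ne_zero]
        exact CNZ _ _ _ _ (by omega) (by omega) (by omega) (by omega)
      · rw [if_neg (by simp only [Prod.mk.injEq]; omega),
            if_pos (by simp only [Prod.mk.injEq]; omega),
            if_neg (by simp only [Prod.mk.injEq]; omega),
            if_neg (by simp only [Prod.mk.injEq]; omega)]
        simp only [add_zero, zero_add]
        exact CNZ _ _ _ _ (by omega) (by omega) (by omega) (by omega)
      · rw [if_neg (by simp only [Prod.mk.injEq]; omega),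
            if_neg (by simp only [Prod.mk.injEq]; omega),
            if_pos (by simp only [Prod.mk.injEq]; omega),
            if_neg (by simp only [Prod.mk.injEq]; omega)]
        simp only [add_zero, zero_add]
        rw [mul_neg, neg_ne_zero]
        exact CNZ _ _ _ _ (by omega) (by omega) (by omega) (by omega)
      · rw [if_neg (by simp only [Prod.mk.injEq]; omega),
            if_neg (by simp only [Prod.mk.injEq]; omega),
            if_neg (by simp only [Prod.mk.injEq]; omega),
            if_pos (by simp only [Prod.mk.injEq]; omega)]
        simp only [add_zero, zero_add]
        exact CNZ _ _ _ _ (by omega) (by omega) (by omega) (by omega)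

lemma conn (q s : ℂ) (hq0 : q ≠ 0) (hq1 : q ≠ 1) (hqm1 : q ≠ -1)
    (hroot : ∀ n : ℕ, 1 ≤ n → q ^ n ≠ 1) (hs : s ^ 2 = q)
    (j j' : ℤ) (hadm : Adm j j') (ε1 ε2 ε3 : ℂ)
    (hε1 : ε1 = 1 ∨ ε1 = -1) (hε2 : ε2 = 1 ∨ ε2 = -1)
    (R : UqSO4 q →ₐ[ℂ] Module.End ℂ (↥(nclSupp j j') → ℂ))
    (hR : IsNclRep q s ε1 ε2 ε3 j j' R)
    (W : Submodule ℂ (↥(nclSupp j j') → ℂ))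
    (hW : ∀ a : UqSO4 q, ∀ x ∈ W, R a x ∈ W) :
    ∀ (n : ℕ) (p p' : ℤ × ℤ), p ∈ nclSupp j j' → p' ∈ nclSupp j j' →
      (p'.1 - p.1).natAbs + (p'.2 - p.2).natAbs ≤ n →
      bvec (nclSupp j j') p ∈ W → bvec (nclSupp j j') p' ∈ W := by
  have hstep := step q s hq0 hq1 hqm1 hroot hs j j' hadm ε1 ε2 ε3 hε1 hε2 R hR W hW
  intro n
  induction n with
  | zero =>
    rintro ⟨k, l⟩ ⟨k', l'⟩ hp hp' hd hw
    have hd' : (k' - k).natAbs + (l' - l).natAbs ≤ 0 := hd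
    obtain ⟨rfl, rfl⟩ : k = k' ∧ l = l' := by omega
    exact hw
  | succ n ih =>
    rintro ⟨k, l⟩ ⟨k', l'⟩ hp hp' hd hw
    have hd' : (k' - k).natAbs + (l' - l).natAbs ≤ n + 1 := hd
    rcases hadm with ⟨hj, hj', hjj, hjj'⟩ | ⟨hj, hj', hjj, hjj'⟩
    · obtain ⟨hk1, hkj, hl1, hlj, hk2, hl2⟩ := (mem_ncl_odd hj k l).mp hp
      obtain ⟨hk1', hkj', hl1', hlj', hk2', hl2'⟩ := (mem_ncl_odd hj k' l').mp hp'
      rcases lt_trichotomy k k' with h | h | h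
      · have hmid : (k + 2, l) ∈ nclSupp j j' := (mem_ncl_odd hj _ _).mpr (by omega)
        have hw2 := hstep k l (k + 2) l hp hmid (Or.inr ⟨rfl, Or.inl rfl⟩) hw
        have hdist : (k' - (k + 2)).natAbs + (l' - l).natAbs ≤ n := by omega
        exact ih (k + 2, l) (k', l') hmid hp' hdist hw2
      · rcases lt_trichotomy l l' with h2 | h2 | h2
        · have hmid : (k, l + 2) ∈ nclSupp j j' := (mem_ncl_odd hj _ _).mpr (by omega)
          have hw2 := hstep k l k (l + 2) hp hmid (Or.inl ⟨rfl, Or.inl rfl⟩) hw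
          have hdist : (k' - k).natAbs + (l' - (l + 2)).natAbs ≤ n := by omega
          exact ih (k, l + 2) (k', l') hmid hp' hdist hw2
        · have hEq : ((k : ℤ), (l : ℤ)) = (k', l') := by rw [h, h2]
          exact hEq ▸ hw
        · have hmid : (k, l - 2) ∈ nclSupp j j' := (mem_ncl_odd hj _ _).mpr (by omega)
          have hw2 := hstep k l k (l - 2) hp hmid (Or.inl ⟨rfl, Or.inr rfl⟩) hw
          have hdist : (k' - k).natAbs + (l' - (l - 2)).natAbs ≤ n := by omega
          exact ih (k, l - 2) (k', l') hmid hp' hdist hw2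
      · have hmid : (k - 2, l) ∈ nclSupp j j' := (mem_ncl_odd hj _ _).mpr (by omega)
        have hw2 := hstep k l (k - 2) l hp hmid (Or.inr ⟨rfl, Or.inr rfl⟩) hw
        have hdist : (k' - (k - 2)).natAbs + (l' - l).natAbs ≤ n := by omega
        exact ih (k - 2, l) (k', l') hmid hp' hdist hw2
    · obtain ⟨hk1, hkj, hl1, hlj, hk2, hl2⟩ := (mem_ncl_even hj k l).mp hp
      obtain ⟨hk1', hkj', hl1', hlj', hk2', hl2'⟩ := (mem_ncl_even hj k' l').mp hp'
      rcases lt_trichotomy k k' with h | h | h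
      · have hmid : (k + 2, l) ∈ nclSupp j j' := (mem_ncl_even hj _ _).mpr (by omega)
        have hw2 := hstep k l (k + 2) l hp hmid (Or.inr ⟨rfl, Or.inl rfl⟩) hw
        have hdist : (k' - (k + 2)).natAbs + (l' - l).natAbs ≤ n := by omega
        exact ih (k + 2, l) (k', l') hmid hp' hdist hw2
      · rcases lt_trichotomy l l' with h2 | h2 | h2
        · have hmid : (k, l + 2) ∈ nclSupp j j' := (mem_ncl_even hj _ _).mpr (by omega)
          have hw2 := hstep k l k (l + 2) hp hmid (Or.inl ⟨rfl, Or.inl rfl⟩) hw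
          have hdist : (k' - k).natAbs + (l' - (l + 2)).natAbs ≤ n := by omega
          exact ih (k, l + 2) (k', l') hmid hp' hdist hw2
        · have hEq : ((k : ℤ), (l : ℤ)) = (k', l') := by rw [h, h2]
          exact hEq ▸ hw
        · have hmid : (k, l - 2) ∈ nclSupp j j' := (mem_ncl_even hj _ _).mpr (by omega)
          have hw2 := hstep k l k (l - 2) hp hmid (Or.inl ⟨rfl, Or.inr rfl⟩) hw
          have hdist : (k' - k).natAbs + (l' - (l - 2)).natAbs ≤ n := by omega
          exact ih (k, l - 2) (k', l') hmid hp' hdist hw2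
      · have hmid : (k - 2, l) ∈ nclSupp j j' := (mem_ncl_even hj _ _).mpr (by omega)
        have hw2 := hstep k l (k - 2) l hp hmid (Or.inr ⟨rfl, Or.inr rfl⟩) hw
        have hdist : (k' - (k - 2)).natAbs + (l' - l).natAbs ≤ n := by omega
        exact ih (k - 2, l) (k', l') hmid hp' hdist hw2


/-- first part of Theorem 3: if `q` is not a root of unity, the
nonclassical-type representations `R^{(ε1,ε2,ε3)}_{jj'}` of `U'_q(so_4)` are
irreducible. -/
theorem stmt_8 (q s : ℂ) (hq0 : q ≠ 0) (hq1 : q ≠ 1) (hqm1 : q ≠ -1)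
    (hroot : ∀ n : ℕ, 1 ≤ n → q ^ n ≠ 1) (hs : s ^ 2 = q)
    (j j' : ℤ) (hadm : Adm j j')
    (ε1 ε2 ε3 : ℂ) (hε1 : ε1 = 1 ∨ ε1 = -1) (hε2 : ε2 = 1 ∨ ε2 = -1)
    (hε3 : ε3 = 1 ∨ ε3 = -1)
    (R : UqSO4 q →ₐ[ℂ] Module.End ℂ (↥(nclSupp j j') → ℂ))
    (hR : IsNclRep q s ε1 ε2 ε3 j j' R) :
    ∀ W : Submodule ℂ (↥(nclSupp j j') → ℂ),
      (∀ a : UqSO4 q, ∀ x ∈ W, R a x ∈ W) → W = ⊥ ∨ W = ⊤ := by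
  intro W hW
  by_cases hbot : W = ⊥
  · exact Or.inl hbot
  · refine Or.inr ?_
    obtain ⟨x, hxW, hx0⟩ := (Submodule.ne_bot_iff W).mp hbot
    have hex : ∃ b : ↥(nclSupp j j'), x b ≠ 0 := by
      by_contra h
      push_neg at h
      exact hx0 (funext fun b => h b)
    obtain ⟨b, hb⟩ := hex
    have hbase : bvec (nclSupp j j') ↑b ∈ W :=
      extractW q s hq0 hq1 hqm1 hroot hs j j' hadm ε1 ε2 ε3 hε1 hε2 R hR W hW x hxW ↑b b.2 hb
    rw [Submodule.eq_top_iff']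
    intro y
    rw [← sum_bvec _ y]
    refine Submodule.sum_mem W fun c _ => Submodule.smul_mem W _ ?_
    exact conn q s hq0 hq1 hqm1 hroot hs j j' hadm ε1 ε2 ε3 hε1 hε2 R hR W hW
      (((c : ℤ × ℤ).1 - (b : ℤ × ℤ).1).natAbs + ((c : ℤ × ℤ).2 - (b : ℤ × ℤ).2).natAbs)
      ↑b ↑c b.2 c.2 le_rfl hbase
end
end

section
/- Let q not be a root of unity, let R be a finite-dimensional representation of U'_q(so_4), let k, l ∈ (1/2)ℤ, and let v be a vector with R(I21)v = i·[k+l]·v and R(I43)v = i·[k−l]·v. Then: R(I21)(X1^{(k,l)}v) = i·[k+l+1]·X1^{(k,l)}v and R(I43)(X1^{(k,l)}v) = i·[k−l−1]·X1^{(k,l)}v; R(I21)(X2^{(k,l)}v) = i·[k+l−1]·X2^{(k,l)}v and R(I43)(X2^{(k,l)}v) = i·[k−l+1]·X2^{(k,l)}v; R(I21)(X3^{(k,l)}v) = i·[k+l+1]·X3^{(k,l)}v and R(I43)(X3^{(k,l)}v) = i·[k−l+1]·X3^{(k,l)}v; R(I21)(X4^{(k,l)}v) = i·[k+l−1]·X4^{(k,l)}v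 and R(I43)(X4^{(k,l)}v) = i·[k−l−1]·X4^{(k,l)}v. -/
noncomputable section

open Classical

variable {q : ℂ}

/-- The operator `X1^{(k,l)}` (indices are doubled half-integers). -/
def X1 (s : ℂ) {V : Type} [AddCommGroup V] [Module ℂ V]
    (R : UqSO4 q →ₐ[ℂ] Module.End ℂ V) (k l : ℤ) : Module.End ℂ V :=
  -R (J41 q s) + (q ^ (-k)) • R (J32 q) - (Complex.I * s ^ (-k - l + 1)) • R (J42 q s)
    - (Complex.I * s ^ (-k + l - 1)) • R (J31 q s)

/-- The operator `X2^{(k,l)}` (indices are doubled half-integers). -/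
def X2 (s : ℂ) {V : Type} [AddCommGroup V] [Module ℂ V]
    (R : UqSO4 q →ₐ[ℂ] Module.End ℂ V) (k l : ℤ) : Module.End ℂ V :=
  -R (J41 q s) + (q ^ k) • R (J32 q) + (Complex.I * s ^ (k + l + 1)) • R (J42 q s)
    + (Complex.I * s ^ (k - l - 1)) • R (J31 q s)

/-- The operator `X3^{(k,l)}` (indices are doubled half-integers). -/
def X3 (s : ℂ) {V : Type} [AddCommGroup V] [Module ℂ V]
    (R : UqSO4 q →ₐ[ℂ] Module.End ℂ V) (k l : ℤ) : Module.End ℂ V :=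
  R (J41 q s) + (q ^ (-l)) • R (J32 q) + (Complex.I * s ^ (-k - l + 1)) • R (J42 q s)
    - (Complex.I * s ^ (k - l - 1)) • R (J31 q s)

/-- The operator `X4^{(k,l)}` (indices are doubled half-integers). -/
def X4 (s : ℂ) {V : Type} [AddCommGroup V] [Module ℂ V]
    (R : UqSO4 q →ₐ[ℂ] Module.End ℂ V) (k l : ℤ) : Module.End ℂ V :=
  R (J41 q s) + (q ^ l) • R (J32 q) - (Complex.I * s ^ (k + l + 1)) • R (J42 q s)
    + (Complex.I * s ^ (-k + l - 1)) • R (J31 q s)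

lemma relJ2' (q : ℂ) :
    J32 q * (J21 q)^2 - (q + q⁻¹) • (J21 q * J32 q * J21 q) + (J21 q)^2 * J32 q = -(J32 q) := by
  have h := RingQuot.mkAlgHom_rel ℂ (SO4Rel.r2 (q := q))
  simp only [map_sub, map_add, map_mul, map_smul, map_pow, map_neg] at h
  simpa [J21, J32] using h

lemma relJ3' (q : ℂ) :
    J32 q * (J43 q)^2 - (q + q⁻¹) • (J43 q * J32 q * J43 q) + (J43 q)^2 * J32 q = -(J32 q) := by
  have h := RingQuot.mkAlgHom_rel ℂ (SO4Rel.r3 (q := q))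
  simp only [map_sub, map_add, map_mul, map_smul, map_pow, map_neg] at h
  simpa [J32, J43] using h

lemma relJ5' (q : ℂ) : J21 q * J43 q = J43 q * J21 q := by
  have h := RingQuot.mkAlgHom_rel ℂ (SO4Rel.r5 (q := q))
  simpa [J21, J43, map_mul] using h

section ShiftLemmas
variable (s : ℂ) (hs0 : s ≠ 0) (h4 : (s:ℂ)^(4:ℕ) - 1 ≠ 0)
include hs0 h4

lemma hDD : (s^2 - (s^2)⁻¹ : ℂ) ≠ 0 := by
  intro h
  apply h4
  have h2 : (s:ℂ)^(2:ℕ) ≠ 0 := pow_ne_zero _ hs0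
  field_simp at h
  linear_combination h

lemma qNum_add2 (m : ℤ) : qNum (s^2) s (m+2) = s^2 * qNum (s^2) s m + s ^ (-m) := by
  have hm : s ^ m ≠ 0 := zpow_ne_zero m hs0
  have key : s^(m+2) - s^(-(m+2)) = s^2 * (s^m - s^(-m)) + s^(-m) * (s^2 - (s^2)⁻¹) := by
    simp only [neg_add, zpow_add₀ hs0, zpow_neg, zpow_two, pow_two]
    field_simp
    ring
  rw [qNum, qNum, key, add_div, mul_div_assoc, mul_div_assoc,
    div_self (hDD s hs0 h4), mul_one]

lemma qNum_add2' (m : ℤ) : qNum (s^2) s (m+2) = (s^2)⁻¹ * qNum (s^2) s m + s ^ m := by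
  have hm : s ^ m ≠ 0 := zpow_ne_zero m hs0
  have key : s^(m+2) - s^(-(m+2)) = (s^2)⁻¹ * (s^m - s^(-m)) + s^m * (s^2 - (s^2)⁻¹) := by
    simp only [neg_add, zpow_add₀ hs0, zpow_neg, zpow_two, pow_two]
    field_simp
    ring
  rw [qNum, qNum, key, add_div, mul_div_assoc, mul_div_assoc,
    div_self (hDD s hs0 h4), mul_one]

lemma qNum_sub2 (m : ℤ) : qNum (s^2) s (m-2) = s^2 * qNum (s^2) s m - s ^ m := by
  have hm : s ^ m ≠ 0 := zpow_ne_zero m hs0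
  have key : s^(m-2) - s^(-(m-2)) = s^2 * (s^m - s^(-m)) - s^m * (s^2 - (s^2)⁻¹) := by
    simp only [sub_eq_add_neg, neg_add, neg_neg, zpow_add₀ hs0, zpow_neg, zpow_two, pow_two]
    field_simp
    ring
  rw [qNum, qNum, key, sub_div, mul_div_assoc, mul_div_assoc,
    div_self (hDD s hs0 h4), mul_one]

lemma qNum_sub2' (m : ℤ) : qNum (s^2) s (m-2) = (s^2)⁻¹ * qNum (s^2) s m - s ^ (-m) := by
  have hm : s ^ m ≠ 0 := zpow_ne_zero m hs0
  have key : s^(m-2) - s^(-(m-2)) = (s^2)⁻¹ * (s^m - s^(-m)) - s^(-m) * (s^2 - (s^2)⁻¹) := by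
    simp only [sub_eq_add_neg, neg_add, neg_neg, zpow_add₀ hs0, zpow_neg, zpow_two, pow_two]
    field_simp
    ring
  rw [qNum, qNum, key, sub_div, mul_div_assoc, mul_div_assoc,
    div_self (hDD s hs0 h4), mul_one]
end ShiftLemmas
set_option maxHeartbeats 10000000 in
/-- Lemma 1: the vectors `Xi^{(k,l)} v` are eigenvectors of `R(I21)` and
`R(I43)` with the shifted classical eigenvalues.  All half-integer indices `k, l, m` are
encoded by their doubles (so `[k+l]` is `qNum q s (k+l)` with doubled `k, l`). -/
theorem stmt_10 (q s : ℂ) (hq0 : q ≠ 0) (hq1 : q ≠ 1) (hqm1 : q ≠ -1)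
    (hroot : ∀ n : ℕ, 1 ≤ n → q ^ n ≠ 1) (hs : s ^ 2 = q)
    (V : Type) [AddCommGroup V] [Module ℂ V] [FiniteDimensional ℂ V] [Nontrivial V]
    (R : UqSO4 q →ₐ[ℂ] Module.End ℂ V) (k l : ℤ) (v : V)
    (hv1 : R (J21 q) v = (Complex.I * qNum q s (k + l)) • v)
    (hv2 : R (J43 q) v = (Complex.I * qNum q s (k - l)) • v) :
    (R (J21 q) (X1 s R k l v) = (Complex.I * qNum q s (k + l + 2)) • X1 s R k l v ∧
     R (J43 q) (X1 s R k l v) = (Complex.I * qNum q s (k - l - 2)) • X1 s R k l v) ∧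
    (R (J21 q) (X2 s R k l v) = (Complex.I * qNum q s (k + l - 2)) • X2 s R k l v ∧
     R (J43 q) (X2 s R k l v) = (Complex.I * qNum q s (k - l + 2)) • X2 s R k l v) ∧
    (R (J21 q) (X3 s R k l v) = (Complex.I * qNum q s (k + l + 2)) • X3 s R k l v ∧
     R (J43 q) (X3 s R k l v) = (Complex.I * qNum q s (k - l + 2)) • X3 s R k l v) ∧
    (R (J21 q) (X4 s R k l v) = (Complex.I * qNum q s (k + l - 2)) • X4 s R k l v ∧
     R (J43 q) (X4 s R k l v) = (Complex.I * qNum q s (k - l - 2)) • X4 s R k l v) := by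
  subst hs
  have hs0 : s ≠ 0 := by intro h; exact hq0 (by rw [h]; ring)
  have hq2 : (s^2 : ℂ) ≠ 0 := pow_ne_zero _ hs0
  have hD : (s^2 - (s^2)⁻¹ : ℂ) ≠ 0 := by
    have h4 : (s^2 - 1 : ℂ) * (s^2 + 1) ≠ 0 :=
      mul_ne_zero (sub_ne_zero.mpr hq1) (by intro h; exact hqm1 (by linear_combination h))
    intro h
    apply h4
    have : (s^2:ℂ) * (s^2 - (s^2)⁻¹) = (s^2 - 1) * (s^2 + 1) := by field_simp; ring
    rw [← this, h, mul_zero]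
  set a := R (J21 (s^2)) with haD
  set b := R (J32 (s^2)) with hbD
  set c := R (J43 (s^2)) with hcD
  set u := Complex.I * qNum (s^2) s (k + l) with hu
  set w := Complex.I * qNum (s^2) s (k - l) with hw
  set B := b v with hBd
  set P := R (J31 (s^2) s) v with hPd
  set Q := R (J42 (s^2) s) v with hQd
  set E := R (J41 (s^2) s) v with hEd
  clear_value a b c u w B P Q E
  -- commutation of a and c
  have hac : ∀ x : V, a (c x) = c (a x) := by
    intro x
    have h := congrArg R (relJ5' (s^2))
    rw [map_mul, map_mul, ← haD, ← hcD] at h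
    calc a (c x) = (a * c) x := rfl
      _ = (c * a) x := by rw [h]
      _ = c (a x) := rfl
  -- basic expressions of P, Q, E
  have hP : P = s • a B - (s⁻¹ * u) • B := by
    rw [hPd, J31, qbr, map_sub, map_smul, map_smul, map_mul, map_mul, ← haD, ← hbD]
    simp only [LinearMap.sub_apply, LinearMap.smul_apply, Module.End.mul_apply]
    rw [hv1, map_smul, smul_smul, ← hBd]
  have hQ : Q = (s * w) • B - s⁻¹ • c B := by
    rw [hQd, J42, qbr, map_sub, map_smul, map_smul, map_mul, map_mul, ← hbD, ← hcD]
    simp only [LinearMap.sub_apply, LinearMap.smul_apply, Module.End.mul_apply]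
    rw [hv2, map_smul, smul_smul, ← hBd]
  have hE : E = (s * w) • P - s⁻¹ • c P := by
    rw [hEd, J41, qbr, map_sub, map_smul, map_smul, map_mul, map_mul, ← hcD]
    simp only [LinearMap.sub_apply, LinearMap.smul_apply, Module.End.mul_apply]
    rw [hv2, map_smul, smul_smul, ← hPd]
  -- solve for a B, c B, c P
  have haB : a B = s⁻¹ • P + ((s*s)⁻¹ * u) • B := by
    rw [hP]; match_scalars <;> field_simp <;> ring
  have hcB : c B = (s * s * w) • B - s • Q := by
    rw [hQ]; match_scalars <;> field_simp <;> ring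
  have hcP : c P = (s * s * w) • P - s • E := by
    rw [hE]; match_scalars <;> field_simp <;> ring
  -- the Serre relations applied to v
  have ha2B : a (a B) = ((s^2 + (s^2)⁻¹) * u) • a B - (u * u + 1) • B := by
    have hO : b * a^2 - ((s^2) + (s^2)⁻¹) • (a*b*a) + a^2*b = -b := by
      have h := congrArg R (relJ2' (s^2))
      simp only [map_sub, map_add, map_mul, map_smul, map_pow, map_neg] at h
      rw [← haD, ← hbD] at h; exact h
    rw [pow_two] at hO
    have h2 := DFunLike.congr_fun hO v
    simp only [LinearMap.sub_apply, LinearMap.add_apply, LinearMap.smul_apply,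
      Module.End.mul_apply, LinearMap.neg_apply, hv1, map_smul, smul_smul, ← hBd] at h2
    linear_combination (norm := module) h2
  have hc2B : c (c B) = ((s^2 + (s^2)⁻¹) * w) • c B - (w * w + 1) • B := by
    have hO : b * c^2 - ((s^2) + (s^2)⁻¹) • (c*b*c) + c^2*b = -b := by
      have h := congrArg R (relJ3' (s^2))
      simp only [map_sub, map_add, map_mul, map_smul, map_pow, map_neg] at h
      rw [← hcD, ← hbD] at h; exact h
    rw [pow_two] at hO
    have h2 := DFunLike.congr_fun hO v
    simp only [LinearMap.sub_apply, LinearMap.add_apply, LinearMap.smul_apply,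
      Module.End.mul_apply, LinearMap.neg_apply, hv2, map_smul, smul_smul, ← hBd] at h2
    linear_combination (norm := module) h2
  have haP : a P = (s * s * u) • P - s • B := by
    rw [hP]
    simp only [map_sub, map_smul]
    rw [ha2B, haB]
    match_scalars <;> field_simp <;> ring
  have hcQ : c Q = s⁻¹ • B + ((s*s)⁻¹ * w) • Q := by
    rw [hQ]
    simp only [map_sub, map_smul]
    rw [hc2B, hcB]
    match_scalars <;> field_simp <;> ring
  have haQ : a Q = s⁻¹ • E + ((s*s)⁻¹ * u) • Q := by
    rw [hQ]
    simp only [map_sub, map_smul]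
    rw [hac, haB]
    simp only [map_add, map_smul]
    rw [hcP, hcB]
    match_scalars <;> field_simp <;> ring
  have hc2P : c (c P) = ((s^2 + (s^2)⁻¹) * w) • c P - (w * w + 1) • P := by
    rw [hP]
    simp only [map_sub, map_smul]
    rw [show c (a B) = a (c B) from (hac B).symm]
    rw [show c (a (c B)) = a (c (c B)) from (hac (c B)).symm]
    rw [hc2B]
    simp only [map_sub, map_smul]
    rw [hac, haB]
    simp only [map_add, map_smul]
    rw [hcP, hcB]
    match_scalars <;> field_simp <;> ring
  have hcE : c E = s⁻¹ • P + ((s*s)⁻¹ * w) • E := by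
    rw [hE]
    simp only [map_sub, map_smul]
    rw [hc2P, hcP]
    match_scalars <;> field_simp <;> ring
  have haE : a E = (s * s * u) • E - s • Q := by
    rw [hE]
    simp only [map_sub, map_smul]
    rw [hac, haP]
    simp only [map_sub, map_smul]
    rw [hcP, hcB]
    match_scalars <;> field_simp <;> ring
  have h4 : (s:ℂ)^(4:ℕ) - 1 ≠ 0 := by
    intro h
    have h' : ((s:ℂ)^2 - 1) * ((s:ℂ)^2 + 1) = 0 := by linear_combination h
    rcases mul_eq_zero.mp h' with h'' | h''
    · exact hq1 (by linear_combination h'')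
    · exact hqm1 (by linear_combination h'')
  have hsk : s ^ k ≠ 0 := zpow_ne_zero k hs0
  have hsl : s ^ l ≠ 0 := zpow_ne_zero l hs0
  have hX1 : (X1 s R k l) v = -E + ((s^2) ^ (-k)) • B - (Complex.I * s ^ (-k - l + 1)) • Q
      - (Complex.I * s ^ (-k + l - 1)) • P := by
    simp only [X1, LinearMap.add_apply, LinearMap.sub_apply, LinearMap.neg_apply,
      LinearMap.smul_apply, ← haD, ← hbD, ← hcD, ← hBd, ← hPd, ← hQd, ← hEd]
  have hX2 : (X2 s R k l) v = -E + ((s^2) ^ k) • B + (Complex.I * s ^ (k + l + 1)) • Q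
      + (Complex.I * s ^ (k - l - 1)) • P := by
    simp only [X2, LinearMap.add_apply, LinearMap.sub_apply, LinearMap.neg_apply,
      LinearMap.smul_apply, ← haD, ← hbD, ← hcD, ← hBd, ← hPd, ← hQd, ← hEd]
  have hX3 : (X3 s R k l) v = E + ((s^2) ^ (-l)) • B + (Complex.I * s ^ (-k - l + 1)) • Q
      - (Complex.I * s ^ (k - l - 1)) • P := by
    simp only [X3, LinearMap.add_apply, LinearMap.sub_apply, LinearMap.neg_apply,
      LinearMap.smul_apply, ← haD, ← hbD, ← hcD, ← hBd, ← hPd, ← hQd, ← hEd]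
  have hX4 : (X4 s R k l) v = E + ((s^2) ^ l) • B - (Complex.I * s ^ (k + l + 1)) • Q
      + (Complex.I * s ^ (-k + l - 1)) • P := by
    simp only [X4, LinearMap.add_apply, LinearMap.sub_apply, LinearMap.neg_apply,
      LinearMap.smul_apply, ← haD, ← hbD, ← hcD, ← hBd, ← hPd, ← hQd, ← hEd]
  refine ⟨⟨?_, ?_⟩, ⟨?_, ?_⟩, ⟨?_, ?_⟩, ⟨?_, ?_⟩⟩
  · rw [hX1]
    simp only [map_add, map_sub, map_neg, map_smul]
    rw [haE, haB, haQ, haP]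
    match_scalars <;> simp only [hu, hw]
    · rw [qNum_add2 s hs0 h4]
      simp only [sub_eq_add_neg, neg_add, neg_neg, zpow_add₀ hs0, zpow_neg, zpow_one, zpow_two,
        pow_two, mul_zpow]
      field_simp
      ring_nf
      try simp only [Complex.I_sq]
      try ring_nf
    · rw [qNum_add2' s hs0 h4]
      simp only [sub_eq_add_neg, neg_add, neg_neg, zpow_add₀ hs0, zpow_neg, zpow_one, zpow_two,
        pow_two, mul_zpow]
      field_simp
      ring_nf
      try simp only [Complex.I_sq]
      try ring_nf
    · rw [qNum_add2 s hs0 h4]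
      simp only [sub_eq_add_neg, neg_add, neg_neg, zpow_add₀ hs0, zpow_neg, zpow_one, zpow_two,
        pow_two, mul_zpow]
      field_simp
      ring_nf
      try simp only [Complex.I_sq]
      try ring_nf
    · rw [qNum_add2' s hs0 h4]
      simp only [sub_eq_add_neg, neg_add, neg_neg, zpow_add₀ hs0, zpow_neg, zpow_one, zpow_two,
        pow_two, mul_zpow]
      field_simp
      try simp only [Complex.I_sq]
      try ring_nf
  · rw [hX1]
    simp only [map_add, map_sub, map_neg, map_smul]
    rw [hcE, hcB, hcQ, hcP]
    match_scalars <;> simp only [hu, hw]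
    · rw [qNum_sub2 s hs0 h4]
      simp only [sub_eq_add_neg, neg_add, neg_neg, zpow_add₀ hs0, zpow_neg, zpow_one, zpow_two,
        pow_two, mul_zpow]
      field_simp
      ring_nf
      try simp only [Complex.I_sq]
      try ring_nf
    · rw [qNum_sub2' s hs0 h4]
      simp only [sub_eq_add_neg, neg_add, neg_neg, zpow_add₀ hs0, zpow_neg, zpow_one, zpow_two,
        pow_two, mul_zpow]
      field_simp
      ring_nf
      try simp only [Complex.I_sq]
      try ring_nf
    · rw [qNum_sub2 s hs0 h4]
      simp only [sub_eq_add_neg, neg_add, neg_neg, zpow_add₀ hs0, zpow_neg, zpow_one, zpow_two,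
        pow_two, mul_zpow]
      field_simp
      try simp only [Complex.I_sq]
      try ring_nf
    · rw [qNum_sub2' s hs0 h4]
      simp only [sub_eq_add_neg, neg_add, neg_neg, zpow_add₀ hs0, zpow_neg, zpow_one, zpow_two,
        pow_two, mul_zpow]
      field_simp
      ring_nf
      try simp only [Complex.I_sq]
      try ring_nf
  · rw [hX2]
    simp only [map_add, map_sub, map_neg, map_smul]
    rw [haE, haB, haQ, haP]
    match_scalars <;> simp only [hu, hw]
    · rw [qNum_sub2 s hs0 h4]
      simp only [sub_eq_add_neg, neg_add, neg_neg, zpow_add₀ hs0, zpow_neg, zpow_one, zpow_two,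
        pow_two, mul_zpow]
      field_simp
      ring_nf
      try simp only [Complex.I_sq]
      try ring_nf
    · rw [qNum_sub2' s hs0 h4]
      simp only [sub_eq_add_neg, neg_add, neg_neg, zpow_add₀ hs0, zpow_neg, zpow_one, zpow_two,
        pow_two, mul_zpow]
      field_simp
      ring_nf
      try simp only [Complex.I_sq]
      try ring_nf
    · rw [qNum_sub2 s hs0 h4]
      simp only [sub_eq_add_neg, neg_add, neg_neg, zpow_add₀ hs0, zpow_neg, zpow_one, zpow_two,
        pow_two, mul_zpow]
      field_simp
      ring_nf
      try simp only [Complex.I_sq]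
      try ring_nf
    · rw [qNum_sub2' s hs0 h4]
      simp only [sub_eq_add_neg, neg_add, neg_neg, zpow_add₀ hs0, zpow_neg, zpow_one, zpow_two,
        pow_two, mul_zpow]
      field_simp
      try simp only [Complex.I_sq]
      try ring_nf
  · rw [hX2]
    simp only [map_add, map_sub, map_neg, map_smul]
    rw [hcE, hcB, hcQ, hcP]
    match_scalars <;> simp only [hu, hw]
    · rw [qNum_add2 s hs0 h4]
      simp only [sub_eq_add_neg, neg_add, neg_neg, zpow_add₀ hs0, zpow_neg, zpow_one, zpow_two,
        pow_two, mul_zpow]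
      field_simp
      ring_nf
      try simp only [Complex.I_sq]
      try ring_nf
    · rw [qNum_add2' s hs0 h4]
      simp only [sub_eq_add_neg, neg_add, neg_neg, zpow_add₀ hs0, zpow_neg, zpow_one, zpow_two,
        pow_two, mul_zpow]
      field_simp
      ring_nf
      try simp only [Complex.I_sq]
      try ring_nf
    · rw [qNum_add2 s hs0 h4]
      simp only [sub_eq_add_neg, neg_add, neg_neg, zpow_add₀ hs0, zpow_neg, zpow_one, zpow_two,
        pow_two, mul_zpow]
      field_simp
      try simp only [Complex.I_sq]
      try ring_nf
    · rw [qNum_add2' s hs0 h4]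
      simp only [sub_eq_add_neg, neg_add, neg_neg, zpow_add₀ hs0, zpow_neg, zpow_one, zpow_two,
        pow_two, mul_zpow]
      field_simp
      ring_nf
      try simp only [Complex.I_sq]
      try ring_nf
  · rw [hX3]
    simp only [map_add, map_sub, map_neg, map_smul]
    rw [haE, haB, haQ, haP]
    match_scalars <;> simp only [hu, hw]
    · rw [qNum_add2 s hs0 h4]
      simp only [sub_eq_add_neg, neg_add, neg_neg, zpow_add₀ hs0, zpow_neg, zpow_one, zpow_two,
        pow_two, mul_zpow]
      field_simp
      try simp only [Complex.I_sq]
      try ring_nf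
    · rw [qNum_add2' s hs0 h4]
      simp only [sub_eq_add_neg, neg_add, neg_neg, zpow_add₀ hs0, zpow_neg, zpow_one, zpow_two,
        pow_two, mul_zpow]
      field_simp
      ring_nf
      try simp only [Complex.I_sq]
      try ring_nf
    · rw [qNum_add2 s hs0 h4]
      simp only [sub_eq_add_neg, neg_add, neg_neg, zpow_add₀ hs0, zpow_neg, zpow_one, zpow_two,
        pow_two, mul_zpow]
      field_simp
      ring_nf
      try simp only [Complex.I_sq]
      try ring_nf
    · rw [qNum_add2' s hs0 h4]
      simp only [sub_eq_add_neg, neg_add, neg_neg, zpow_add₀ hs0, zpow_neg, zpow_one, zpow_two,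
        pow_two, mul_zpow]
      field_simp
      try simp only [Complex.I_sq]
      try ring_nf
  · rw [hX3]
    simp only [map_add, map_sub, map_neg, map_smul]
    rw [hcE, hcB, hcQ, hcP]
    match_scalars <;> simp only [hu, hw]
    · rw [qNum_add2 s hs0 h4]
      simp only [sub_eq_add_neg, neg_add, neg_neg, zpow_add₀ hs0, zpow_neg, zpow_one, zpow_two,
        pow_two, mul_zpow]
      field_simp
      ring_nf
      try simp only [Complex.I_sq]
      try ring_nf
    · rw [qNum_add2' s hs0 h4]
      simp only [sub_eq_add_neg, neg_add, neg_neg, zpow_add₀ hs0, zpow_neg, zpow_one, zpow_two,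
        pow_two, mul_zpow]
      field_simp
      try simp only [Complex.I_sq]
      try ring_nf
    · rw [qNum_add2 s hs0 h4]
      simp only [sub_eq_add_neg, neg_add, neg_neg, zpow_add₀ hs0, zpow_neg, zpow_one, zpow_two,
        pow_two, mul_zpow]
      field_simp
      try simp only [Complex.I_sq]
      try ring_nf
    · rw [qNum_add2' s hs0 h4]
      simp only [sub_eq_add_neg, neg_add, neg_neg, zpow_add₀ hs0, zpow_neg, zpow_one, zpow_two,
        pow_two, mul_zpow]
      field_simp
      ring_nf
      try simp only [Complex.I_sq]
      try ring_nf
  · rw [hX4]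
    simp only [map_add, map_sub, map_neg, map_smul]
    rw [haE, haB, haQ, haP]
    match_scalars <;> simp only [hu, hw]
    · rw [qNum_sub2 s hs0 h4]
      simp only [sub_eq_add_neg, neg_add, neg_neg, zpow_add₀ hs0, zpow_neg, zpow_one, zpow_two,
        pow_two, mul_zpow]
      field_simp
      try simp only [Complex.I_sq]
      try ring_nf
    · rw [qNum_sub2' s hs0 h4]
      simp only [sub_eq_add_neg, neg_add, neg_neg, zpow_add₀ hs0, zpow_neg, zpow_one, zpow_two,
        pow_two, mul_zpow]
      field_simp
      ring_nf
      try simp only [Complex.I_sq]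
      try ring_nf
    · rw [qNum_sub2 s hs0 h4]
      simp only [sub_eq_add_neg, neg_add, neg_neg, zpow_add₀ hs0, zpow_neg, zpow_one, zpow_two,
        pow_two, mul_zpow]
      field_simp
      ring_nf
      try simp only [Complex.I_sq]
      try ring_nf
    · rw [qNum_sub2' s hs0 h4]
      simp only [sub_eq_add_neg, neg_add, neg_neg, zpow_add₀ hs0, zpow_neg, zpow_one, zpow_two,
        pow_two, mul_zpow]
      field_simp
      try simp only [Complex.I_sq]
      try ring_nf
  · rw [hX4]
    simp only [map_add, map_sub, map_neg, map_smul]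
    rw [hcE, hcB, hcQ, hcP]
    match_scalars <;> simp only [hu, hw]
    · rw [qNum_sub2 s hs0 h4]
      simp only [sub_eq_add_neg, neg_add, neg_neg, zpow_add₀ hs0, zpow_neg, zpow_one, zpow_two,
        pow_two, mul_zpow]
      field_simp
      ring_nf
      try simp only [Complex.I_sq]
      try ring_nf
    · rw [qNum_sub2' s hs0 h4]
      simp only [sub_eq_add_neg, neg_add, neg_neg, zpow_add₀ hs0, zpow_neg, zpow_one, zpow_two,
        pow_two, mul_zpow]
      field_simp
      try simp only [Complex.I_sq]
      try ring_nf
    · rw [qNum_sub2 s hs0 h4]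
      simp only [sub_eq_add_neg, neg_add, neg_neg, zpow_add₀ hs0, zpow_neg, zpow_one, zpow_two,
        pow_two, mul_zpow]
      field_simp
      try simp only [Complex.I_sq]
      try ring_nf
    · rw [qNum_sub2' s hs0 h4]
      simp only [sub_eq_add_neg, neg_add, neg_neg, zpow_add₀ hs0, zpow_neg, zpow_one, zpow_two,
        pow_two, mul_zpow]
      field_simp
      ring_nf
      try simp only [Complex.I_sq]
      try ring_nf
end
end
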